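/- arXiv:math/0402175 — 8 statements merged into one kernel-verified Lean document; each statement's English description precedes it below -/
import Mathlib

section
/- Let X be a compact metric space with its Borel σ-algebra, let σ, τ : X → X be continuous maps with σ ∘ τ = id_X, and let μ, ν, λ be finite Borel measures on X with μ ≪ λ and ν ≪ λ. Set k_μ = d(μ.map τ)/d(λ.map τ) and k_ν = d(ν.map τ)/d(λ.map τ). If Borel functions φ, ψ : X → ℂ satisfy φ(x)·√((dμ/dλ)(x)) = ψ(x)·√((dν/dλ)(x)) for λ-almost every x, then φ(σ(x))·√(k_μ(x)) = ψ(σ(x))·√(k_ν(x)) for (λ.map τ)-almost every x. -/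
open MeasureTheory

/-- The operator `S : class(φ,μ) ↦ class(φ∘σ, μ∘τ⁻¹)` is well defined on equivalence
classes: if `φ·√(dμ/dλ) = ψ·√(dν/dλ)` a.e. `λ`, then, with
`k_μ = d(μ∘τ⁻¹)/d(λ∘τ⁻¹)` and `k_ν = d(ν∘τ⁻¹)/d(λ∘τ⁻¹)`, one has
`(φ∘σ)·√k_μ = (ψ∘σ)·√k_ν` a.e. `λ∘τ⁻¹`. -/
theorem statement3 {X : Type*} [MetricSpace X] [CompactSpace X]
    [MeasurableSpace X] [BorelSpace X]
    (σ τ : X → X) (hσ : Continuous σ) (hτ : Continuous τ)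
    (hστ : σ ∘ τ = id)
    (μ ν lam : Measure X) [IsFiniteMeasure μ] [IsFiniteMeasure ν]
    [IsFiniteMeasure lam]
    (hμl : μ ≪ lam) (hνl : ν ≪ lam)
    (φ ψ : X → ℂ) (hφ : Measurable φ) (hψ : Measurable ψ)
    (h : ∀ᵐ x ∂lam,
      φ x * (Real.sqrt ((μ.rnDeriv lam x).toReal) : ℂ)
        = ψ x * (Real.sqrt ((ν.rnDeriv lam x).toReal) : ℂ)) :
    ∀ᵐ x ∂(lam.map τ),
      φ (σ x) * (Real.sqrt (((μ.map τ).rnDeriv (lam.map τ) x).toReal) : ℂ)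
        = ψ (σ x) * (Real.sqrt (((ν.map τ).rnDeriv (lam.map τ) x).toReal) : ℂ) := by
  have hinj : Function.Injective τ := Function.LeftInverse.injective (congrFun hστ)
  have hemb : MeasurableEmbedding τ :=
    (hτ.isClosedEmbedding hinj).measurableEmbedding
  rw [hemb.ae_map_iff]
  filter_upwards [h, hemb.rnDeriv_map μ lam, hemb.rnDeriv_map ν lam] with y hy hμy hνy
  have hσy : σ (τ y) = y := congrFun hστ y
  simp only [hσy, hμy, hνy, hy]
end

section
/- Let X be a compact metric space with its Borel σ-algebra, let σ : X → X be continuous and surjective, and let τ₁, τ₂ : X → X be continuous maps with σ ∘ τ₁ = id_X, σ ∘ τ₂ = id_X, and τ₁(X) ∩ τ₂(X) = ∅. Let μ, ν be finite Borel measures on X, let φ, ψ : X → ℂ be Borel functions with ∫|φ|²dμ < ∞ and ∫|ψ|²dν < ∞, and let λ be a finite Borel measure with μ.map τ₁ ≪ λ and ν.map τ₂ ≪ λ. Then ∫_X conj(φ(σ(x))) · ψ(σ(x)) · √((d(μ.map τ₁)/dλ)(x)) · √((d(ν.map τ₂)/dλ)(x)) dλ(x) = 0. -/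
open MeasureTheory

lemma rnDeriv_ae_zero_outside {X : Type*} [MeasurableSpace X]
    (m lam : Measure X) [IsFiniteMeasure m] [IsFiniteMeasure lam]
    (hml : m ≪ lam) {s : Set X} (hs : MeasurableSet s) (hms : m s = 0) :
    ∀ᵐ x ∂lam, x ∈ s → m.rnDeriv lam x = 0 := by
  have h : ∫⁻ x in s, m.rnDeriv lam x ∂lam = 0 := by
    rw [Measure.setLIntegral_rnDeriv hml]; exact hms
  exact (setLIntegral_eq_zero_iff hs (m.measurable_rnDeriv lam)).mp h

/-- Two branches `τ₁, τ₂` of the inverse of `σ` with disjoint images give isometries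
with orthogonal ranges on the Hilbert space of square densities:
`⟨S₁(φ,μ) | S₂(ψ,ν)⟩ = 0`. -/
theorem statement4 {X : Type*} [MetricSpace X] [CompactSpace X]
    [MeasurableSpace X] [BorelSpace X]
    (σ τ₁ τ₂ : X → X) (hσc : Continuous σ) (hσs : Function.Surjective σ)
    (hτ₁ : Continuous τ₁) (hτ₂ : Continuous τ₂)
    (hστ₁ : σ ∘ τ₁ = id) (hστ₂ : σ ∘ τ₂ = id)
    (hdisj : Set.range τ₁ ∩ Set.range τ₂ = ∅)
    (μ ν lam : Measure X) [IsFiniteMeasure μ] [IsFiniteMeasure ν]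
    [IsFiniteMeasure lam]
    (φ ψ : X → ℂ) (hφ : Measurable φ) (hψ : Measurable ψ)
    (hφ2 : MemLp φ 2 μ) (hψ2 : MemLp ψ 2 ν)
    (hμl : μ.map τ₁ ≪ lam) (hνl : ν.map τ₂ ≪ lam) :
    ∫ x, (starRingEnd ℂ) (φ (σ x)) * ψ (σ x)
        * (Real.sqrt (((μ.map τ₁).rnDeriv lam x).toReal) : ℂ)
        * (Real.sqrt (((ν.map τ₂).rnDeriv lam x).toReal) : ℂ) ∂lam = 0 := by
  have hr1 : MeasurableSet (Set.range τ₁)ᶜ :=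
    ((isCompact_range hτ₁).isClosed.measurableSet).compl
  have hr2 : MeasurableSet (Set.range τ₂)ᶜ :=
    ((isCompact_range hτ₂).isClosed.measurableSet).compl
  have hm1 : (μ.map τ₁) (Set.range τ₁)ᶜ = 0 := by
    rw [Measure.map_apply hτ₁.measurable hr1]
    have : τ₁ ⁻¹' (Set.range τ₁)ᶜ = ∅ := by ext x; simp
    rw [this]; exact measure_empty
  have hm2 : (ν.map τ₂) (Set.range τ₂)ᶜ = 0 := by
    rw [Measure.map_apply hτ₂.measurable hr2]
    have : τ₂ ⁻¹' (Set.range τ₂)ᶜ = ∅ := by ext x; simp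
    rw [this]; exact measure_empty
  have h1 := rnDeriv_ae_zero_outside (μ.map τ₁) lam hμl hr1 hm1
  have h2 := rnDeriv_ae_zero_outside (ν.map τ₂) lam hνl hr2 hm2
  have hzero : ∀ᵐ x ∂lam, (starRingEnd ℂ) (φ (σ x)) * ψ (σ x)
      * (Real.sqrt (((μ.map τ₁).rnDeriv lam x).toReal) : ℂ)
      * (Real.sqrt (((ν.map τ₂).rnDeriv lam x).toReal) : ℂ) = 0 := by
    filter_upwards [h1, h2] with x h1 h2
    by_cases hx : x ∈ Set.range τ₁
    · have hx2 : x ∈ (Set.range τ₂)ᶜ := by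
        intro hx2
        have : x ∈ Set.range τ₁ ∩ Set.range τ₂ := ⟨hx, hx2⟩
        rw [hdisj] at this; exact this
      rw [h2 hx2]
      simp
    · rw [h1 hx]
      simp
  exact integral_eq_zero_of_ae hzero
end

section
/- Let X be a compact metric space with its Borel σ-algebra, let σ, τ : X → X be continuous maps with σ ∘ τ = id_X, let λ be a finite Borel measure on X, and let μ, ν be finite Borel measures with μ ≪ λ and ν ≪ λ.map τ. Then for all Borel functions φ, ψ : X → ℂ with ∫|φ|²dμ < ∞ and ∫|ψ|²dν < ∞, one has ∫_X conj(φ(σ(x))) · ψ(x) · √((d(μ.map τ)/d(λ.map τ))(x)) · √((dν/d(λ.map τ))(x)) d(λ.map τ)(x) = ∫_X conj(φ(x)) · ψ(τ(x)) · √((dμ/dλ)(x)) · √((dν/d(λ.map τ))(τ(x))) dλ(x). -/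
open MeasureTheory

/-- Change-of-variables identity identifying the adjoint `S* : (φ,μ) ↦ (φ∘τ, μ∘σ⁻¹)`
of the isometry `S : (φ,μ) ↦ (φ∘σ, μ∘τ⁻¹)` on the range of `S`:
`⟨S(φ,μ) | (ψ,ν)⟩` computed over `λ∘τ⁻¹` equals the corresponding integral over `λ`. -/
theorem statement5 {X : Type*} [MetricSpace X] [CompactSpace X]
    [MeasurableSpace X] [BorelSpace X]
    (σ τ : X → X) (hσ : Continuous σ) (hτ : Continuous τ)
    (hστ : σ ∘ τ = id)
    (lam μ ν : Measure X) [IsFiniteMeasure lam] [IsFiniteMeasure μ]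
    [IsFiniteMeasure ν]
    (hμl : μ ≪ lam) (hνl : ν ≪ lam.map τ)
    (φ ψ : X → ℂ) (hφ : Measurable φ) (hψ : Measurable ψ)
    (hφ2 : MemLp φ 2 μ) (hψ2 : MemLp ψ 2 ν) :
    ∫ x, (starRingEnd ℂ) (φ (σ x)) * ψ x
        * (Real.sqrt (((μ.map τ).rnDeriv (lam.map τ) x).toReal) : ℂ)
        * (Real.sqrt ((ν.rnDeriv (lam.map τ) x).toReal) : ℂ) ∂(lam.map τ)
      = ∫ x, (starRingEnd ℂ) (φ x) * ψ (τ x)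
          * (Real.sqrt ((μ.rnDeriv lam x).toReal) : ℂ)
          * (Real.sqrt ((ν.rnDeriv (lam.map τ) (τ x)).toReal) : ℂ) ∂lam := by
  have hinj : Function.Injective τ := Function.LeftInverse.injective (g := σ)
    (fun x => congrFun hστ x)
  have hemb : MeasurableEmbedding τ :=
    (hτ.isClosedEmbedding hinj).measurableEmbedding
  rw [integral_map hτ.aemeasurable]
  · refine integral_congr_ae ?_
    filter_upwards [hemb.rnDeriv_map μ lam] with x hx
    have h1 : σ (τ x) = x := congrFun hστ x
    rw [hx, h1]
  · refine Measurable.aestronglyMeasurable ?_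
    have hc : Measurable fun x => (starRingEnd ℂ) (φ (σ x)) :=
      Complex.continuous_conj.measurable.comp (hφ.comp hσ.measurable)
    exact ((hc.mul hψ).mul (Complex.measurable_ofReal.comp
        ((Measure.measurable_rnDeriv _ _).ennreal_toReal.sqrt))).mul
      (Complex.measurable_ofReal.comp ((Measure.measurable_rnDeriv _ _).ennreal_toReal.sqrt))
end

section
/- Let X be a compact metric space with its Borel σ-algebra, let σ, τ : X → X be continuous maps with σ ∘ τ = id_X, let μ be a Borel probability measure on X with μ.map τ ≪ μ, and set p = d(μ.map τ)/dμ. Then for all φ, ψ ∈ L²(X, μ): ∫_X conj(φ(x)) · ψ(σ(x)) · √(p(x)) dμ(x) = ∫_X conj(φ(τ(x))) · ψ(x) · (√(p(τ(x))))⁻¹ dμ(x), where (√t)⁻¹ is interpreted with the convention 0⁻¹ = 0. Consequently the adjoint of the isometry S_μ : φ ↦ (φ∘σ)·√p on L²(X, μ) is given by (S_μ* φ)(x) = φ(τ(x)) · (√(p(τ(x))))⁻¹. -/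
open MeasureTheory
open scoped ENNReal NNReal

private lemma sqrt_inv_mul_self {t : ℝ} (ht : 0 ≤ t) :
    t * (Real.sqrt t)⁻¹ = Real.sqrt t := by
  rcases eq_or_lt_of_le ht with h | h
  · simp [← h]
  · have hs : Real.sqrt t ≠ 0 := ne_of_gt (Real.sqrt_pos.mpr h)
    rw [inv_eq_one_div, mul_one_div, div_eq_iff hs]
    exact (Real.mul_self_sqrt ht).symm

/-- The adjoint of the isometry `S_μ : φ ↦ (φ∘σ)·√p`, `p = d(μ∘τ⁻¹)/dμ`, on `L²(X,μ)` is
`S_μ* φ = (φ∘τ)·(√(p∘τ))⁻¹` (convention `0⁻¹ = 0`): one has the pairing identity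
`⟨φ | S_μ ψ⟩ = ⟨S_μ* φ | ψ⟩` for all `φ, ψ ∈ L²(μ)`, and `S_μ* φ ∈ L²(μ)`. -/
theorem statement7 {X : Type*} [MetricSpace X] [CompactSpace X]
    [MeasurableSpace X] [BorelSpace X]
    (σ τ : X → X) (hσ : Continuous σ) (hτ : Continuous τ)
    (hστ : σ ∘ τ = id)
    (μ : Measure X) [IsProbabilityMeasure μ]
    (hac : μ.map τ ≪ μ)
    (p : X → ENNReal) (hp : p = (μ.map τ).rnDeriv μ)
    (φ ψ : X → ℂ) (hφ : MemLp φ 2 μ) (hψ : MemLp ψ 2 μ) :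
    (∫ x, (starRingEnd ℂ) (φ x) * ψ (σ x) * (Real.sqrt ((p x).toReal) : ℂ) ∂μ
      = ∫ x, (starRingEnd ℂ) (φ (τ x)) * ψ x
          * (((Real.sqrt ((p (τ x)).toReal))⁻¹ : ℝ) : ℂ) ∂μ)
    ∧ MemLp (fun x => φ (τ x) * (((Real.sqrt ((p (τ x)).toReal))⁻¹ : ℝ) : ℂ)) 2 μ := by
  have hτm : Measurable τ := hτ.measurable
  have hσm : Measurable σ := hσ.measurable
  haveI : IsProbabilityMeasure (μ.map τ) :=
    Measure.isProbabilityMeasure_map hτm.aemeasurable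
  have hpm : Measurable p := hp ▸ Measure.measurable_rnDeriv _ _
  have hplt : ∀ᵐ x ∂μ, p x < ⊤ := hp ▸ Measure.rnDeriv_lt_top _ _
  have hmap : μ.withDensity p = μ.map τ := by
    rw [hp]; exact Measure.withDensity_rnDeriv_eq _ _ hac
  set c : X → ℂ := fun y => (((Real.sqrt ((p y).toReal))⁻¹ : ℝ) : ℂ) with hc
  have hcm : Measurable c :=
    Complex.measurable_ofReal.comp
      ((Real.continuous_sqrt.measurable.comp hpm.ennreal_toReal).inv)
  -- measurability of pieces w.r.t. μ.map τ
  have hφmap : AEStronglyMeasurable φ (μ.map τ) := hφ.1.mono_ac hac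
  have hmapmap : (μ.map τ).map σ = μ := by
    rw [Measure.map_map hσm hτm, hστ, Measure.map_id]
  have hψσ : AEStronglyMeasurable (fun y => ψ (σ y)) (μ.map τ) := by
    have h1 : AEStronglyMeasurable ψ ((μ.map τ).map σ) := by rw [hmapmap]; exact hψ.1
    exact h1.comp_aemeasurable hσm.aemeasurable
  set F : X → ℂ := fun y => (starRingEnd ℂ) (φ y) * ψ (σ y) * c y with hFdef
  have hF : AEStronglyMeasurable F (μ.map τ) :=
    ((Complex.continuous_conj.comp_aestronglyMeasurable hφmap).mul hψσ).mul
      hcm.aestronglyMeasurable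
  have hwd : μ.withDensity (fun x => ((p x).toNNReal : ℝ≥0∞)) = μ.map τ := by
    rw [← hmap]
    refine withDensity_congr_ae ?_
    filter_upwards [hplt] with x hx
    exact ENNReal.coe_toNNReal hx.ne
  constructor
  · -- the pairing identity
    have step1 : ∫ x, (starRingEnd ℂ) (φ x) * ψ (σ x) * (Real.sqrt ((p x).toReal) : ℂ) ∂μ
        = ∫ x, (p x).toNNReal • F x ∂μ := by
      refine integral_congr_ae (Filter.Eventually.of_forall fun x => ?_)
      have ht : (0:ℝ) ≤ (p x).toReal := ENNReal.toReal_nonneg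
      have hsmul : (p x).toNNReal • F x = (((p x).toReal : ℝ) : ℂ) * F x := by
        rw [NNReal.smul_def, Complex.real_smul]; rfl
      have hkey : ((Real.sqrt ((p x).toReal) : ℝ) : ℂ)
          = (((p x).toReal : ℝ) : ℂ) * (((Real.sqrt ((p x).toReal))⁻¹ : ℝ) : ℂ) := by
        rw [← Complex.ofReal_mul, sqrt_inv_mul_self ht]
      show (starRingEnd ℂ) (φ x) * ψ (σ x) * (Real.sqrt ((p x).toReal) : ℂ)
        = (p x).toNNReal • F x
      rw [hsmul, hkey]
      show _ = _ * ((starRingEnd ℂ) (φ x) * ψ (σ x) * _)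
      ring
    have step2 : ∫ x, (p x).toNNReal • F x ∂μ = ∫ y, F y ∂(μ.map τ) := by
      rw [← integral_withDensity_eq_integral_smul (hpm.ennreal_toNNReal) F, hwd]
    have step3 : ∫ y, F y ∂(μ.map τ)
        = ∫ x, (starRingEnd ℂ) (φ (τ x)) * ψ x
            * (((Real.sqrt ((p (τ x)).toReal))⁻¹ : ℝ) : ℂ) ∂μ := by
      rw [integral_map hτm.aemeasurable hF]
      refine integral_congr_ae (Filter.Eventually.of_forall fun x => ?_)
      have hx : σ (τ x) = x := congrFun hστ x
      simp only [hFdef, hc, hx]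
    rw [step1, step2, step3]
  · -- the Memℒp statement
    set G : X → ℂ := fun y => φ y * c y with hGdef
    have hG : AEStronglyMeasurable G (μ.map τ) := hφmap.mul hcm.aestronglyMeasurable
    have hGμ : AEStronglyMeasurable G μ := hφ.1.mul hcm.aestronglyMeasurable
    have hmem : MemLp G 2 (μ.map τ) := by
      refine ⟨hG, ?_⟩
      rw [eLpNorm_lt_top_iff_lintegral_rpow_enorm_lt_top (by norm_num) (by norm_num),
        ← hmap]
      simp only [enorm_eq_nnnorm]
      have hgm : AEMeasurable (fun y => (‖G y‖₊ : ℝ≥0∞) ^ ((2:ℝ≥0∞).toReal)) μ :=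
        hGμ.enorm.pow_const _
      rw [lintegral_withDensity_eq_lintegral_mul₀ hpm.aemeasurable hgm]
      have hbound : ∀ᵐ y ∂μ,
          (fun a => p a * (‖G a‖₊ : ℝ≥0∞) ^ ((2:ℝ≥0∞).toReal)) y
            ≤ (‖φ y‖₊ : ℝ≥0∞) ^ ((2:ℝ≥0∞).toReal) := by
        filter_upwards [hplt] with y hy
        show p y * (‖G y‖₊ : ℝ≥0∞) ^ ((2:ℝ≥0∞).toReal) ≤ _
        set t : ℝ := (p y).toReal with htdef
        have ht : (0:ℝ) ≤ t := ENNReal.toReal_nonneg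
        have hGnorm : (‖G y‖₊ : ℝ≥0∞) = (‖φ y‖₊ : ℝ≥0∞) * (‖c y‖₊ : ℝ≥0∞) := by
          rw [hGdef]; push_cast [nnnorm_mul]; ring
        have hcnorm : (‖c y‖₊ : ℝ≥0∞) = ENNReal.ofReal ((Real.sqrt t)⁻¹) := by
          rw [hc]
          simp only [Complex.nnnorm_real]
          rw [← enorm_eq_nnnorm, ← ofReal_norm, Real.norm_eq_abs,
            abs_of_nonneg (inv_nonneg.mpr (Real.sqrt_nonneg t))]
        have h2 : ((2:ℝ≥0∞).toReal) = (2:ℝ) := by norm_num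
        have hle : p y * (‖c y‖₊ : ℝ≥0∞) ^ ((2:ℝ≥0∞).toReal) ≤ 1 := by
          rw [hcnorm, h2, ENNReal.ofReal_rpow_of_nonneg
            (inv_nonneg.mpr (Real.sqrt_nonneg t)) (by norm_num : (0:ℝ) ≤ 2)]
          have hpy : p y = ENNReal.ofReal t := (ENNReal.ofReal_toReal hy.ne).symm
          rw [hpy, ← ENNReal.ofReal_mul ht]
          have : (Real.sqrt t)⁻¹ ^ (2:ℝ) = t⁻¹ := by
            rw [show (2:ℝ) = ((2:ℕ):ℝ) by norm_num, Real.rpow_natCast,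
              inv_pow, Real.sq_sqrt ht]
          rw [this]
          calc ENNReal.ofReal (t * t⁻¹) ≤ ENNReal.ofReal 1 := by
                refine ENNReal.ofReal_le_ofReal ?_
                rcases eq_or_lt_of_le ht with h | h
                · simp [← h]
                · rw [mul_inv_cancel₀ (ne_of_gt h)]
            _ = 1 := ENNReal.ofReal_one
        calc p y * (‖G y‖₊ : ℝ≥0∞) ^ ((2:ℝ≥0∞).toReal)
            = (‖φ y‖₊ : ℝ≥0∞) ^ ((2:ℝ≥0∞).toReal)
              * (p y * (‖c y‖₊ : ℝ≥0∞) ^ ((2:ℝ≥0∞).toReal)) := by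
              rw [hGnorm, ENNReal.mul_rpow_of_nonneg _ _ (by norm_num)]
              ring
          _ ≤ (‖φ y‖₊ : ℝ≥0∞) ^ ((2:ℝ≥0∞).toReal) * 1 := by
              exact mul_le_mul_right hle _
          _ = (‖φ y‖₊ : ℝ≥0∞) ^ ((2:ℝ≥0∞).toReal) := mul_one _
      calc ∫⁻ y, (fun a => p a) y * (fun a => (‖G a‖₊ : ℝ≥0∞) ^ ((2:ℝ≥0∞).toReal)) y ∂μ
          ≤ ∫⁻ y, (‖φ y‖₊ : ℝ≥0∞) ^ ((2:ℝ≥0∞).toReal) ∂μ := lintegral_mono_ae hbound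
        _ < ⊤ := lintegral_rpow_enorm_lt_top_of_eLpNorm_lt_top (by norm_num) (by norm_num)
            hφ.2
    exact (memLp_map_measure_iff hG hτm.aemeasurable).mp hmem
end

section
/- Let X be a compact metric space, let σ : X → X be continuous and surjective, and let τ_i, τ_j : X → X be continuous maps with σ ∘ τ_i = id_X, σ ∘ τ_j = id_X, and τ_i(X) ∩ τ_j(X) = ∅. Let μ be a Borel probability measure on X with μ.map τ_i ≪ μ and μ.map τ_j ≪ μ, and set p_i = d(μ.map τ_i)/dμ, p_j = d(μ.map τ_j)/dμ. Then for all φ, ψ ∈ L²(X, μ): ∫_X conj(φ(σ(x))) · ψ(σ(x)) · √(p_i(x)) · √(p_j(x)) dμ(x) = 0; that is, the isometries S_i : φ ↦ (φ∘σ)·√(p_i) and S_j : φ ↦ (φ∘σ)·√(p_j) on L²(X, μ) have orthogonal ranges, S_i*S_j = 0. -/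
open MeasureTheory

lemma rnDeriv_zero_off_range {X : Type*} [MetricSpace X] [CompactSpace X]
    [MeasurableSpace X] [BorelSpace X] (τ : X → X) (hτ : Continuous τ)
    (μ : Measure X) [IsFiniteMeasure μ] (hac : μ.map τ ≪ μ) :
    ∀ᵐ x ∂μ, x ∉ Set.range τ → (μ.map τ).rnDeriv μ x = 0 := by
  have hs : MeasurableSet (Set.range τ)ᶜ :=
    (isCompact_range hτ).isClosed.measurableSet.compl
  have h0 : (μ.map τ) (Set.range τ)ᶜ = 0 := by
    rw [Measure.map_apply hτ.measurable hs]
    have : τ ⁻¹' (Set.range τ)ᶜ = ∅ := by ext x; simp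
    simp [this]
  have hint : ∫⁻ x in (Set.range τ)ᶜ, (μ.map τ).rnDeriv μ x ∂μ = 0 := by
    rw [Measure.setLIntegral_rnDeriv hac]; exact h0
  have := (setLIntegral_eq_zero_iff hs (Measure.measurable_rnDeriv _ _)).mp hint
  exact this

/-- Orthogonality of ranges, `Sᵢ*Sⱼ = 0`, for the isometries `Sᵢ φ = (φ∘σ)·√pᵢ` on
`L²(X,μ)` built from branches with disjoint images:
`∫ conj(φ∘σ)·(ψ∘σ)·√pᵢ·√pⱼ dμ = 0`. -/
theorem statement10 {X : Type*} [MetricSpace X] [CompactSpace X]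
    [MeasurableSpace X] [BorelSpace X]
    (σ τi τj : X → X) (hσc : Continuous σ) (hσs : Function.Surjective σ)
    (hτi : Continuous τi) (hτj : Continuous τj)
    (hστi : σ ∘ τi = id) (hστj : σ ∘ τj = id)
    (hdisj : Set.range τi ∩ Set.range τj = ∅)
    (μ : Measure X) [IsProbabilityMeasure μ]
    (haci : μ.map τi ≪ μ) (hacj : μ.map τj ≪ μ)
    (pi pj : X → ENNReal)
    (hpi : pi = (μ.map τi).rnDeriv μ) (hpj : pj = (μ.map τj).rnDeriv μ)
    (φ ψ : X → ℂ) (hφ : MemLp φ 2 μ) (hψ : MemLp ψ 2 μ) :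
    ∫ x, (starRingEnd ℂ) (φ (σ x)) * ψ (σ x)
        * (Real.sqrt ((pi x).toReal) : ℂ)
        * (Real.sqrt ((pj x).toReal) : ℂ) ∂μ = 0 := by
  have hi := rnDeriv_zero_off_range τi hτi μ haci
  have hj := rnDeriv_zero_off_range τj hτj μ hacj
  rw [integral_eq_zero_of_ae]
  filter_upwards [hi, hj] with x hxi hxj
  have : pi x = 0 ∨ pj x = 0 := by
    by_cases h : x ∈ Set.range τi
    · right
      apply hpj ▸ hxj
      intro hmem
      have : x ∈ Set.range τi ∩ Set.range τj := ⟨h, hmem⟩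
      simp [hdisj] at this
    · left; exact hpi ▸ hxi h
  rcases this with h | h <;> simp [h]
end

section
/- (Hutchinson) Let X be a nonempty compact metric space with metric d, let N ≥ 1, and let τ₁, …, τ_N : X → X satisfy d(τ_i(x), τ_i(y)) ≤ C·d(x,y) for all x, y ∈ X and all i, for some constant 0 < C < 1. Let p₁, …, p_N > 0 with ∑_{i=1}^N p_i = 1. Then there exists a unique Borel probability measure μ on X such that ∑_{i=1}^N p_i · (μ.map τ_i) = μ. -/
open MeasureTheory

open MeasureTheory Set Filter Metric Topology
set_option linter.unusedSectionVars false

namespace HutchAux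

variable {N : ℕ}

noncomputable def q (p : Fin N → ℝ) : ℕ → ℝ := fun k => if h : k < N then p ⟨k, h⟩ else 0

noncomputable def s (p : Fin N → ℝ) : ℕ → ℝ := fun k => ∑ j ∈ Finset.range k, q p j

lemma s_zero (p : Fin N → ℝ) : s p 0 = 0 := by simp [s]

lemma s_succ (p : Fin N → ℝ) (k : ℕ) : s p (k + 1) = s p k + q p k := by
  simp [s, Finset.sum_range_succ]

lemma q_nonneg {p : Fin N → ℝ} (hp : ∀ i, 0 ≤ p i) (k : ℕ) : 0 ≤ q p k := by
  unfold q; split <;> simp [hp _]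

lemma s_mono {p : Fin N → ℝ} (hp : ∀ i, 0 ≤ p i) : Monotone (s p) := by
  apply monotone_nat_of_le_succ
  intro n
  rw [s_succ]
  linarith [q_nonneg hp n]

lemma q_fin (p : Fin N → ℝ) (i : Fin N) : q p i.1 = p i := by
  unfold q; rw [dif_pos i.isLt]

lemma s_N {p : Fin N → ℝ} (hsum : ∑ i, p i = 1) : s p N = 1 := by
  unfold s
  rw [← hsum, ← Fin.sum_univ_eq_sum_range (fun k => q p k) N]
  exact Finset.sum_congr rfl fun i _ => q_fin p i

noncomputable def dig (hN : 1 ≤ N) (p : Fin N → ℝ) (t : ℝ) : Fin N :=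
  ⟨@Nat.findGreatest (fun k => s p k ≤ t) (Classical.decPred _) (N - 1),
    lt_of_le_of_lt (Nat.findGreatest_le _) (Nat.sub_lt hN one_pos)⟩

lemma dig_val (hN : 1 ≤ N) (p : Fin N → ℝ) (t : ℝ) :
    (dig hN p t).1 = @Nat.findGreatest (fun k => s p k ≤ t) (Classical.decPred _) (N - 1) := rfl

lemma dig_eq (hN : 1 ≤ N) {p : Fin N → ℝ} (hp : ∀ i, 0 < p i) {t : ℝ} (i : Fin N)
    (h1 : s p i.1 ≤ t) (h2 : t < s p (i.1 + 1)) : dig hN p t = i := by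
  apply Fin.ext
  rw [dig_val, Nat.findGreatest_eq_iff]
  refine ⟨by omega, fun _ => h1, fun m hm _ hle => ?_⟩
  have : s p (i.1 + 1) ≤ s p m := s_mono (fun i => (hp i).le) hm
  linarith

lemma dig_spec (hN : 1 ≤ N) {p : Fin N → ℝ} (hp : ∀ i, 0 < p i) (hsum : ∑ i, p i = 1)
    {t : ℝ} (ht : t ∈ Ico (0:ℝ) 1) :
    s p (dig hN p t).1 ≤ t ∧ t < s p ((dig hN p t).1 + 1) := by
  have hP0 : s p 0 ≤ t := by rw [s_zero]; exact ht.1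
  constructor
  · rw [dig_val]
    exact Nat.findGreatest_spec (P := fun k => s p k ≤ t) (Nat.zero_le _) hP0
  · by_cases hle : (dig hN p t).1 + 1 ≤ N - 1
    · by_contra hcon
      push_neg at hcon
      have := Nat.findGreatest_is_greatest (P := fun k => s p k ≤ t)
        (n := N - 1) (k := (dig hN p t).1 + 1) (by rw [← dig_val hN p t]; omega) hle
      exact this hcon
    · have hge : N ≤ (dig hN p t).1 + 1 := by omega
      have : (1:ℝ) ≤ s p ((dig hN p t).1 + 1) := by
        rw [← s_N hsum]; exact s_mono (fun i => (hp i).le) hge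
      linarith [ht.2]

lemma aux_meas (A : Prop) (c : ℝ) : MeasurableSet {t : ℝ | A → c ≤ t} := by
  by_cases h : A
  · simp only [h, forall_true_left]; exact measurableSet_Ici
  · simp only [h]; simp

lemma aux_meas' (A : Prop) (c : ℝ) : MeasurableSet {t : ℝ | A → ¬ c ≤ t} := by
  by_cases h : A
  · simp only [h, forall_true_left, not_le]; exact measurableSet_Iio
  · simp only [h]; simp

lemma measurable_dig (hN : 1 ≤ N) {p : Fin N → ℝ} : Measurable (dig hN p) := by
  apply measurable_to_countable'
  intro i
  have : dig hN p ⁻¹' {i} =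
      {t : ℝ | i.1 ≠ 0 → s p i.1 ≤ t} ∩ ⋂ m : ℕ, {t : ℝ | (i.1 < m ∧ m ≤ N - 1) → ¬ s p m ≤ t} := by
    ext t
    simp only [mem_preimage, mem_singleton_iff, mem_inter_iff, mem_iInter, mem_setOf_eq]
    constructor
    · rintro rfl
      have h := (Nat.findGreatest_eq_iff (m := (dig hN p t).1)
        (P := fun k => s p k ≤ t) (k := N - 1)).1 (dig_val hN p t).symm
      exact ⟨h.2.1, fun m hm => h.2.2 hm.1 hm.2⟩
    · intro ⟨h1, h2⟩
      apply Fin.ext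
      rw [dig_val, Nat.findGreatest_eq_iff]
      exact ⟨by omega, h1, fun m hm hle => h2 m ⟨hm, hle⟩⟩
  rw [this]
  exact (aux_meas _ _).inter (MeasurableSet.iInter fun m => aux_meas' _ _)


section Coding

variable {X : Type*} [MetricSpace X] [CompactSpace X] [Nonempty X]
    [MeasurableSpace X] [BorelSpace X]

variable {C : ℝ}

lemma lip_tau {τ : Fin N → X → X} (hC0 : 0 < C)
    (hlip : ∀ i, ∀ x y : X, dist (τ i x) (τ i y) ≤ C * dist x y) (i : Fin N) :
    LipschitzWith C.toNNReal (τ i) :=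
  LipschitzWith.of_dist_le_mul fun x y => by
    rw [Real.coe_toNNReal C hC0.le]; exact hlip i x y

noncomputable def sig (hN : 1 ≤ N) (p : Fin N → ℝ) (t : ℝ) : ℝ :=
  (t - s p (dig hN p t).1) / p (dig hN p t)

lemma measurable_sig (hN : 1 ≤ N) (p : Fin N → ℝ) : Measurable (sig hN p) := by
  apply Measurable.div
  · exact measurable_id.sub ((measurable_of_countable (fun i : Fin N => s p i.1)).comp
      (measurable_dig hN))
  · exact (measurable_of_countable p).comp (measurable_dig hN)

lemma sig_mem (hN : 1 ≤ N) {p : Fin N → ℝ} (hp : ∀ i, 0 < p i) (hsum : ∑ i, p i = 1)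
    {t : ℝ} (ht : t ∈ Ico (0:ℝ) 1) : sig hN p t ∈ Ico (0:ℝ) 1 := by
  obtain ⟨h1, h2⟩ := dig_spec hN hp hsum ht
  have hq : s p ((dig hN p t).1 + 1) = s p (dig hN p t).1 + p (dig hN p t) := by
    rw [s_succ, q_fin]
  unfold sig
  constructor
  · exact div_nonneg (by linarith) (hp _).le
  · rw [div_lt_one (hp _)]; linarith

noncomputable def itr (hN : 1 ≤ N) (p : Fin N → ℝ) (τ : Fin N → X → X) (x₀ : X) :
    ℕ → ℝ → X
  | 0, _ => x₀
  | (n+1), t => τ (dig hN p t) (itr hN p τ x₀ n (sig hN p t))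

lemma measurable_itr (hN : 1 ≤ N) (p : Fin N → ℝ) {τ : Fin N → X → X} (x₀ : X)
    (hC0 : 0 < C) (hlip : ∀ i, ∀ x y : X, dist (τ i x) (τ i y) ≤ C * dist x y) (n : ℕ) :
    Measurable (itr hN p τ x₀ n) := by
  induction n with
  | zero => exact measurable_const
  | succ n ih =>
    have hF : Measurable (fun q : X × Fin N => τ q.2 q.1) :=
      measurable_from_prod_countable_left fun i => (lip_tau hC0 hlip i).continuous.measurable
    exact hF.comp ((ih.comp (measurable_sig hN p)).prodMk (measurable_dig hN))

lemma itr_dist (hN : 1 ≤ N) (p : Fin N → ℝ) {τ : Fin N → X → X} (x₀ : X)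
    (hC0 : 0 < C) (hlip : ∀ i, ∀ x y : X, dist (τ i x) (τ i y) ≤ C * dist x y)
    {B : ℝ} (hB : ∀ x y : X, dist x y ≤ B) (n : ℕ) (t : ℝ) :
    dist (itr hN p τ x₀ (n+1) t) (itr hN p τ x₀ n t) ≤ B * C ^ n := by
  induction n generalizing t with
  | zero => simpa [itr] using hB _ _
  | succ n ih =>
    show dist (τ _ _) (τ _ _) ≤ _
    calc dist (τ (dig hN p t) (itr hN p τ x₀ (n+1) (sig hN p t)))
          (τ (dig hN p t) (itr hN p τ x₀ n (sig hN p t)))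
        ≤ C * dist (itr hN p τ x₀ (n+1) (sig hN p t)) (itr hN p τ x₀ n (sig hN p t)) :=
          hlip _ _ _
      _ ≤ C * (B * C ^ n) :=
          mul_le_mul_of_nonneg_left (ih (sig hN p t)) hC0.le
      _ = B * C ^ (n+1) := by ring

lemma itr_cauchy (hN : 1 ≤ N) (p : Fin N → ℝ) {τ : Fin N → X → X} (x₀ : X)
    (hC0 : 0 < C) (hC1 : C < 1)
    (hlip : ∀ i, ∀ x y : X, dist (τ i x) (τ i y) ≤ C * dist x y)
    {B : ℝ} (hB : ∀ x y : X, dist x y ≤ B) (t : ℝ) :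
    CauchySeq (fun n => itr hN p τ x₀ n t) := by
  apply cauchySeq_of_le_geometric C B hC1
  intro n
  rw [dist_comm]
  exact itr_dist hN p x₀ hC0 hlip hB n t

noncomputable def cm (hN : 1 ≤ N) (p : Fin N → ℝ) (τ : Fin N → X → X) (x₀ : X)
    (t : ℝ) : X :=
  limUnder atTop (fun n => itr hN p τ x₀ n t)

lemma cm_tendsto (hN : 1 ≤ N) (p : Fin N → ℝ) {τ : Fin N → X → X} (x₀ : X)
    (hC0 : 0 < C) (hC1 : C < 1)
    (hlip : ∀ i, ∀ x y : X, dist (τ i x) (τ i y) ≤ C * dist x y)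
    {B : ℝ} (hB : ∀ x y : X, dist x y ≤ B) (t : ℝ) :
    Tendsto (fun n => itr hN p τ x₀ n t) atTop (𝓝 (cm hN p τ x₀ t)) :=
  (itr_cauchy hN p x₀ hC0 hC1 hlip hB t).tendsto_limUnder

lemma measurable_cm (hN : 1 ≤ N) (p : Fin N → ℝ) {τ : Fin N → X → X} (x₀ : X)
    (hC0 : 0 < C) (hC1 : C < 1)
    (hlip : ∀ i, ∀ x y : X, dist (τ i x) (τ i y) ≤ C * dist x y)
    {B : ℝ} (hB : ∀ x y : X, dist x y ≤ B) :
    Measurable (cm hN p τ x₀) :=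
  measurable_of_tendsto_metrizable (measurable_itr hN p x₀ hC0 hlip)
    (tendsto_pi_nhds.2 fun t => cm_tendsto hN p x₀ hC0 hC1 hlip hB t)

lemma cm_eq (hN : 1 ≤ N) (p : Fin N → ℝ) {τ : Fin N → X → X} (x₀ : X)
    (hC0 : 0 < C) (hC1 : C < 1)
    (hlip : ∀ i, ∀ x y : X, dist (τ i x) (τ i y) ≤ C * dist x y)
    {B : ℝ} (hB : ∀ x y : X, dist x y ≤ B) (t : ℝ) :
    cm hN p τ x₀ t = τ (dig hN p t) (cm hN p τ x₀ (sig hN p t)) := by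
  have h1 : Tendsto (fun n => itr hN p τ x₀ (n+1) t) atTop (𝓝 (cm hN p τ x₀ t)) :=
    (cm_tendsto hN p x₀ hC0 hC1 hlip hB t).comp (tendsto_add_atTop_nat 1)
  have h2 : Tendsto (fun n => itr hN p τ x₀ (n+1) t) atTop
      (𝓝 (τ (dig hN p t) (cm hN p τ x₀ (sig hN p t)))) := by
    have := ((lip_tau hC0 hlip (dig hN p t)).continuous.tendsto _).comp
      (cm_tendsto hN p x₀ hC0 hC1 hlip hB (sig hN p t))
    exact this
  exact tendsto_nhds_unique h1 h2

end Coding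

section MeasureConstruction

variable {X : Type*} [MetricSpace X] [CompactSpace X] [Nonempty X]
    [MeasurableSpace X] [BorelSpace X]
variable {C : ℝ}

lemma pairwise_disjoint_Ico {p : Fin N → ℝ} (hp : ∀ i, 0 < p i) :
    Pairwise (Function.onFun Disjoint (fun i : Fin N => Ico (s p i.1) (s p (i.1+1)))) := by
  have key : ∀ i j : Fin N, i.1 < j.1 →
      Disjoint (Ico (s p i.1) (s p (i.1+1))) (Ico (s p j.1) (s p (j.1+1))) := by
    intro i j hij
    exact Set.Ico_disjoint_Ico_same.mono_right (Ico_subset_Ico_left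
      (s_mono (fun k => (hp k).le) hij)) |>.mono_left le_rfl
  intro i j hij
  rcases lt_or_gt_of_ne (fun h => hij (Fin.ext h) : i.1 ≠ j.1) with h | h
  · exact key i j h
  · exact (key j i h).symm

lemma union_Ico (hN : 1 ≤ N) {p : Fin N → ℝ} (hp : ∀ i, 0 < p i) (hsum : ∑ i, p i = 1) :
    (⋃ i : Fin N, Ico (s p i.1) (s p (i.1+1))) = Ico (0:ℝ) 1 := by
  ext t
  simp only [mem_iUnion, mem_Ico]
  constructor
  · rintro ⟨i, h1, h2⟩
    have l0 : s p 0 ≤ s p i.1 := s_mono (fun k => (hp k).le) (Nat.zero_le _)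
    have lN : s p (i.1+1) ≤ s p N := s_mono (fun k => (hp k).le) i.isLt
    rw [s_zero] at l0
    rw [s_N hsum] at lN
    exact ⟨by linarith, by linarith⟩
  · intro ht
    exact ⟨dig hN p t, (dig_spec hN hp hsum ht).1, (dig_spec hN hp hsum ht).2⟩

lemma vol_preimage_affine {b c : ℝ} (hc : 0 < c) (S : Set ℝ) (hS : MeasurableSet S) :
    volume ((fun t => (t - b) / c) ⁻¹' S) = ENNReal.ofReal c * volume S := by
  have hset : (fun t => (t - b) / c) ⁻¹' S
      = (fun t => t + (-b)) ⁻¹' ((fun u => c⁻¹ * u) ⁻¹' S) := by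
    ext t
    simp only [mem_preimage]
    rw [div_eq_inv_mul, sub_eq_add_neg]
  rw [hset, measure_preimage_add_right, Real.volume_preimage_mul_left (inv_ne_zero hc.ne') S,
    inv_inv, abs_of_pos hc]

/-- The key self-similarity identity for the coding map. -/
lemma key_identity (hN : 1 ≤ N) {p : Fin N → ℝ} (hp : ∀ i, 0 < p i) (hsum : ∑ i, p i = 1)
    {τ : Fin N → X → X} (x₀ : X)
    (hC0 : 0 < C) (hC1 : C < 1)
    (hlip : ∀ i, ∀ x y : X, dist (τ i x) (τ i y) ≤ C * dist x y)
    {B : ℝ} (hB : ∀ x y : X, dist x y ≤ B)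
    (E : Set X) (hE : MeasurableSet E) :
    volume (cm hN p τ x₀ ⁻¹' E ∩ Ico (0:ℝ) 1)
      = ∑ i : Fin N, ENNReal.ofReal (p i) * volume ((τ i ∘ cm hN p τ x₀) ⁻¹' E ∩ Ico (0:ℝ) 1) := by
  have hcm : Measurable (cm hN p τ x₀) := measurable_cm hN p x₀ hC0 hC1 hlip hB
  -- decompose the interval
  have hdecomp : cm hN p τ x₀ ⁻¹' E ∩ Ico (0:ℝ) 1
      = ⋃ i : Fin N, (cm hN p τ x₀ ⁻¹' E ∩ Ico (s p i.1) (s p (i.1+1))) := by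
    rw [← union_Ico hN hp hsum, inter_iUnion]
  rw [hdecomp, measure_iUnion
    (fun i j hij => ((pairwise_disjoint_Ico hp hij).mono inter_subset_right inter_subset_right))
    (fun i => (hcm hE).inter measurableSet_Ico), tsum_fintype]
  apply Finset.sum_congr rfl
  intro i _
  -- per-interval computation
  set b := s p i.1 with hb
  set ψ : ℝ → ℝ := fun t => (t - b) / p i with hψ
  have hsucc : s p (i.1 + 1) = b + p i := by rw [s_succ, q_fin]
  have hsub : Ico b (s p (i.1+1)) ⊆ Ico (0:ℝ) 1 := by
    rw [← union_Ico hN hp hsum]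
    exact subset_iUnion (fun j : Fin N => Ico (s p j.1) (s p (j.1+1))) i
  have hmem : ∀ t ∈ Ico b (s p (i.1+1)), dig hN p t = i := by
    intro t ht
    exact dig_eq hN hp i ht.1 ht.2
  have hset : cm hN p τ x₀ ⁻¹' E ∩ Ico b (s p (i.1+1))
      = ψ ⁻¹' ((τ i ∘ cm hN p τ x₀) ⁻¹' E ∩ Ico (0:ℝ) 1) := by
    ext t
    simp only [mem_inter_iff, mem_preimage, Function.comp_apply, mem_Ico]
    constructor
    · rintro ⟨htE, ht⟩
      have hd : dig hN p t = i := hmem t ht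
      have hsig : sig hN p t = ψ t := by
        unfold sig; rw [hd]
      have hcmeq := cm_eq hN p x₀ hC0 hC1 hlip hB t
      rw [hd, hsig] at hcmeq
      have hsm := sig_mem hN hp hsum (hsub ht)
      rw [hsig] at hsm
      exact ⟨by rw [← hcmeq]; exact htE, hsm.1, hsm.2⟩
    · rintro ⟨htE, h0, h1⟩
      have hpi := hp i
      have ht1 : b ≤ t := by
        have := (le_div_iff₀ hpi).1 h0
        linarith
      have ht2 : t < s p (i.1+1) := by
        have := (div_lt_one hpi).1 h1
        rw [hsucc]; linarith
      have hd : dig hN p t = i := hmem t ⟨ht1, ht2⟩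
      have hsig : sig hN p t = ψ t := by
        unfold sig; rw [hd]
      have hcmeq := cm_eq hN p x₀ hC0 hC1 hlip hB t
      rw [hd, hsig] at hcmeq
      exact ⟨by rw [hcmeq]; exact htE, ht1, ht2⟩
  rw [hset]
  exact vol_preimage_affine (hp i) _
    ((((lip_tau hC0 hlip i).continuous.measurable.comp hcm) hE).inter measurableSet_Ico)

end MeasureConstruction

section Final

open scoped NNReal ENNReal

variable {X : Type*} [MetricSpace X] [CompactSpace X] [Nonempty X]
    [MeasurableSpace X] [BorelSpace X]
variable {C : ℝ}

lemma cont_integrable {f : X → ℝ} (hf : Continuous f) (m : Measure X) [IsFiniteMeasure m] :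
    Integrable f m := by
  obtain ⟨M, hM⟩ := isBounded_iff_forall_norm_le.1 (isCompact_range hf).isBounded
  exact ⟨hf.aestronglyMeasurable,
    HasFiniteIntegral.of_bounded (C := M) (ae_of_all _ fun x => hM _ (mem_range_self x))⟩

/-- Probability measures with equal integrals against 1-Lipschitz functions are equal. -/
lemma meas_ext (μ ν : Measure X) [IsProbabilityMeasure μ] [IsProbabilityMeasure ν]
    (h : ∀ f : X → ℝ, LipschitzWith 1 f → ∫ x, f x ∂μ = ∫ x, f x ∂ν) : μ = ν := by
  -- upgrade to arbitrary Lipschitz constant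
  have h' : ∀ (K : ℝ≥0) (f : X → ℝ), LipschitzWith K f → ∫ x, f x ∂μ = ∫ x, f x ∂ν := by
    intro K f hf
    rcases eq_or_ne K 0 with rfl | hK
    · have x₀ : X := Classical.arbitrary X
      have : f = fun _ => f x₀ := by
        funext x
        have := hf.dist_le_mul x x₀
        simp only [NNReal.coe_zero, zero_mul] at this
        have := le_antisymm this dist_nonneg
        rwa [dist_eq_zero] at this
      rw [this]
      simp [integral_const, measure_univ]
    · set g : X → ℝ := fun x => (K:ℝ)⁻¹ * f x with hg
      have hKpos : (0:ℝ) < K := lt_of_le_of_ne K.coe_nonneg (by exact_mod_cast (Ne.symm hK))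
      have hglip : LipschitzWith 1 g := by
        apply LipschitzWith.of_dist_le_mul
        intro x y
        rw [Real.dist_eq]
        have : g x - g y = (K:ℝ)⁻¹ * (f x - f y) := by rw [hg]; ring
        rw [this, abs_mul, abs_of_pos (inv_pos.2 hKpos)]
        calc (K:ℝ)⁻¹ * |f x - f y| ≤ (K:ℝ)⁻¹ * ((K:ℝ) * dist x y) := by
              apply mul_le_mul_of_nonneg_left _ (inv_pos.2 hKpos).le
              rw [← Real.dist_eq]
              exact hf.dist_le_mul x y
          _ = 1 * dist x y := by field_simp
      have := h g hglip
      rw [integral_const_mul, integral_const_mul] at this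
      have := mul_left_cancel₀ (inv_ne_zero hKpos.ne') this
      exact this
  -- equality on closed sets
  have closed_eq : ∀ F : Set X, IsClosed F → μ F = ν F := by
    intro F hF
    rcases eq_empty_or_nonempty F with rfl | hFne
    · simp
    set g : ℕ → X → ℝ := fun n x => max (1 - n * infDist x F) 0 with hgdef
    have glip : ∀ n : ℕ, LipschitzWith n (g n) := by
      intro n
      apply LipschitzWith.of_dist_le_mul
      intro x y
      rw [Real.dist_eq]
      calc |g n x - g n y| ≤ |(1 - n * infDist x F) - (1 - n * infDist y F)| :=
            abs_max_sub_max_le_abs _ _ _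
        _ = (n:ℝ) * |infDist x F - infDist y F| := by
            rw [show (1 - (n:ℝ) * infDist x F) - (1 - (n:ℝ) * infDist y F)
              = (n:ℝ) * (infDist y F - infDist x F) by ring, abs_mul,
              abs_of_nonneg (Nat.cast_nonneg n), abs_sub_comm]
        _ ≤ (n:ℝ) * dist x y := by
            apply mul_le_mul_of_nonneg_left _ (Nat.cast_nonneg n)
            rw [← Real.dist_eq]
            simpa using (lipschitz_infDist_pt F).dist_le_mul x y
        _ = ((n:ℝ≥0):ℝ) * dist x y := by norm_cast
    have gmem : ∀ (n : ℕ) (x : X), g n x ∈ Icc (0:ℝ) 1 := by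
      intro n x
      constructor
      · exact le_max_right _ _
      · apply max_le _ zero_le_one
        have : (0:ℝ) ≤ n * infDist x F :=
          mul_nonneg (Nat.cast_nonneg n) (infDist_nonneg)
        linarith
    have gtend : ∀ x : X, Tendsto (fun n => g n x) atTop (𝓝 (F.indicator (fun _ => (1:ℝ)) x)) := by
      intro x
      by_cases hx : x ∈ F
      · have : ∀ n : ℕ, g n x = 1 := by
          intro n
          simp [hgdef, infDist_zero_of_mem hx]
        rw [indicator_of_mem hx]
        simp only [this]
        exact tendsto_const_nhds
      · have hd : 0 < infDist x F := (hF.notMem_iff_infDist_pos hFne).1 hx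
        rw [indicator_of_notMem hx]
        apply Tendsto.congr' _ tendsto_const_nhds
        filter_upwards [eventually_ge_atTop ⌈(infDist x F)⁻¹⌉₊] with n hn
        have h1 : (infDist x F)⁻¹ ≤ (n:ℝ) := le_trans (Nat.le_ceil _) (by exact_mod_cast hn)
        have h2 : (1:ℝ) ≤ n * infDist x F := by
          rw [← inv_mul_cancel₀ hd.ne']
          exact mul_le_mul_of_nonneg_right h1 hd.le
        simp [hgdef, max_eq_right, sub_nonpos.2 h2]
    have hdom : ∀ (m : Measure X), IsProbabilityMeasure m →
        Tendsto (fun n => ∫ x, g n x ∂m) atTop (𝓝 ((m F).toReal)) := by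
      intro m hm
      haveI := hm
      have := MeasureTheory.tendsto_integral_of_dominated_convergence (μ := m)
        (F := fun n x => g n x) (f := F.indicator (fun _ => (1:ℝ))) (bound := fun _ => 1)
        (fun n => ((glip n).continuous).aestronglyMeasurable)
        (integrable_const 1)
        (fun n => ae_of_all _ fun x => by
          have h1 := (gmem n x).1
          have h2 := (gmem n x).2
          show ‖g n x‖ ≤ 1
          rw [Real.norm_eq_abs, abs_le]
          exact ⟨by linarith, h2⟩)
        (ae_of_all _ gtend)
      rwa [integral_indicator_const (1:ℝ) hF.measurableSet, smul_eq_mul, mul_one] at this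
    have : (μ F).toReal = (ν F).toReal := by
      apply tendsto_nhds_unique (hdom μ inferInstance)
      have : (fun n => ∫ x, g n x ∂μ) = (fun n => ∫ x, g n x ∂ν) := by
        funext n
        exact h' n (g n) (glip n)
      rw [this]
      exact hdom ν inferInstance
    exact (ENNReal.toReal_eq_toReal_iff' (measure_ne_top μ F) (measure_ne_top ν F)).1 this
  refine ext_of_generate_finite {s : Set X | IsClosed s} ?_ ?_ (fun s hs => closed_eq s hs) ?_
  · borelize X
    exact borel_eq_generateFrom_isClosed
  · intro s hs t ht _
    exact hs.inter ht
  · simp [measure_univ]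

end Final

section Main

open scoped NNReal ENNReal

variable {X : Type*} [MetricSpace X] [CompactSpace X] [Nonempty X]
    [MeasurableSpace X] [BorelSpace X]
variable {N : ℕ} {C : ℝ}

lemma integral_fixed {τ : Fin N → X → X} {p : Fin N → ℝ}
    (hC0 : 0 < C) (hlip : ∀ i, ∀ x y : X, dist (τ i x) (τ i y) ≤ C * dist x y)
    (hp : ∀ i, 0 < p i)
    (μ : Measure X) [IsProbabilityMeasure μ]
    (hfix : ∑ i : Fin N, (ENNReal.ofReal (p i)) • (μ.map (τ i)) = μ)
    (f : X → ℝ) (hf : Continuous f) :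
    ∫ x, f x ∂μ = ∑ i : Fin N, p i * ∫ x, f (τ i x) ∂μ := by
  have hmeas : ∀ i, Measurable (τ i) := fun i => (lip_tau hC0 hlip i).continuous.measurable
  have hint : ∀ i : Fin N, Integrable f ((ENNReal.ofReal (p i)) • (μ.map (τ i))) := by
    intro i
    haveI : IsProbabilityMeasure (μ.map (τ i)) :=
      Measure.isProbabilityMeasure_map (hmeas i).aemeasurable
    refine (integrable_smul_measure ?_ ENNReal.ofReal_ne_top).2 (cont_integrable hf _)
    simp only [ne_eq, ENNReal.ofReal_eq_zero, not_le]
    exact hp i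
  conv_lhs => rw [← hfix]
  rw [integral_finset_sum_measure (fun i _ => hint i)]
  apply Finset.sum_congr rfl
  intro i _
  rw [integral_smul_measure, integral_map (hmeas i).aemeasurable hf.aestronglyMeasurable,
    ENNReal.toReal_ofReal (hp i).le, smul_eq_mul]

lemma fixed_unique {τ : Fin N → X → X} {p : Fin N → ℝ}
    (hC0 : 0 < C) (hC1 : C < 1)
    (hlip : ∀ i, ∀ x y : X, dist (τ i x) (τ i y) ≤ C * dist x y)
    (hp : ∀ i, 0 < p i) (hsum : ∑ i, p i = 1)
    (μ ν : Measure X) [IsProbabilityMeasure μ] [IsProbabilityMeasure ν]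
    (hμ : ∑ i : Fin N, (ENNReal.ofReal (p i)) • (μ.map (τ i)) = μ)
    (hν : ∑ i : Fin N, (ENNReal.ofReal (p i)) • (ν.map (τ i)) = ν) : μ = ν := by
  obtain ⟨B, hB⟩ : ∃ B : ℝ, ∀ x y : X, dist x y ≤ B := by
    obtain ⟨B, hB⟩ := isBounded_iff.1 (isCompact_univ (X := X)).isBounded
    exact ⟨B, fun x y => hB (mem_univ x) (mem_univ y)⟩
  have key : ∀ n : ℕ, ∀ f : X → ℝ, LipschitzWith 1 f →
      ∫ x, f x ∂μ - ∫ x, f x ∂ν ≤ (2*B) * C ^ n := by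
    intro n
    induction n with
    | zero =>
      intro f hf
      set x₀ : X := Classical.arbitrary X
      have hfd : ∀ x : X, |f x - f x₀| ≤ B := by
        intro x
        calc |f x - f x₀| = dist (f x) (f x₀) := (Real.dist_eq _ _).symm
          _ ≤ 1 * dist x x₀ := hf.dist_le_mul x x₀
          _ ≤ B := by rw [one_mul]; exact hB x x₀
      have hint : ∀ (m : Measure X), IsProbabilityMeasure m →
          |∫ x, f x ∂m - f x₀| ≤ B := by
        intro m hm
        haveI := hm
        have : ∫ x, f x ∂m - f x₀ = ∫ x, (f x - f x₀) ∂m := by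
          rw [integral_sub (cont_integrable hf.continuous m) (integrable_const _),
            integral_const, measureReal_def, measure_univ, ENNReal.toReal_one, one_smul]
        rw [this]
        calc |∫ x, (f x - f x₀) ∂m| ≤ ∫ x, |f x - f x₀| ∂m := by
              simpa [Real.norm_eq_abs] using
                norm_integral_le_integral_norm (μ := m) (fun x => f x - f x₀)
          _ ≤ ∫ _x, B ∂m := integral_mono
              ((cont_integrable hf.continuous m).sub (integrable_const _)).abs
              (integrable_const _) (fun x => hfd x)
          _ = B := by rw [integral_const, measureReal_def, measure_univ, ENNReal.toReal_one, one_smul]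
      have h1 := hint μ inferInstance
      have h2 := hint ν inferInstance
      rw [abs_le] at h1 h2
      simp only [pow_zero, mul_one]
      linarith [h1.1, h1.2, h2.1, h2.2]
    | succ n ih =>
      intro f hf
      rw [integral_fixed hC0 hlip hp μ hμ f hf.continuous,
        integral_fixed hC0 hlip hp ν hν f hf.continuous, ← Finset.sum_sub_distrib]
      have per : ∀ i : Fin N,
          p i * ∫ x, f (τ i x) ∂μ - p i * ∫ x, f (τ i x) ∂ν ≤ p i * ((2*B) * C ^ (n+1)) := by
        intro i
        set g : X → ℝ := fun x => C⁻¹ * f (τ i x) with hg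
        have hglip : LipschitzWith 1 g := by
          apply LipschitzWith.of_dist_le_mul
          intro x y
          rw [Real.dist_eq]
          have : g x - g y = C⁻¹ * (f (τ i x) - f (τ i y)) := by rw [hg]; ring
          rw [this, abs_mul, abs_of_pos (inv_pos.2 hC0)]
          calc C⁻¹ * |f (τ i x) - f (τ i y)| ≤ C⁻¹ * dist (τ i x) (τ i y) := by
                apply mul_le_mul_of_nonneg_left _ (inv_pos.2 hC0).le
                rw [← Real.dist_eq]
                simpa using hf.dist_le_mul (τ i x) (τ i y)
            _ ≤ C⁻¹ * (C * dist x y) :=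
                mul_le_mul_of_nonneg_left (hlip i x y) (inv_pos.2 hC0).le
            _ = 1 * dist x y := by field_simp
        have hih := ih g hglip
        have hgint : ∀ (m : Measure X), ∫ x, g x ∂m = C⁻¹ * ∫ x, f (τ i x) ∂m := by
          intro m
          rw [hg]
          exact integral_const_mul _ _
        rw [hgint μ, hgint ν] at hih
        have : ∫ x, f (τ i x) ∂μ - ∫ x, f (τ i x) ∂ν ≤ C * ((2*B) * C ^ n) := by
          have := mul_le_mul_of_nonneg_left hih hC0.le
          rw [mul_sub, ← mul_assoc, ← mul_assoc, mul_inv_cancel₀ hC0.ne', one_mul, one_mul]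
            at this
          linarith
        calc p i * ∫ x, f (τ i x) ∂μ - p i * ∫ x, f (τ i x) ∂ν
            = p i * (∫ x, f (τ i x) ∂μ - ∫ x, f (τ i x) ∂ν) := by ring
          _ ≤ p i * (C * ((2*B) * C ^ n)) := mul_le_mul_of_nonneg_left this (hp i).le
          _ = p i * ((2*B) * C ^ (n+1)) := by ring
      calc ∑ i : Fin N, (p i * ∫ x, f (τ i x) ∂μ - p i * ∫ x, f (τ i x) ∂ν)
          ≤ ∑ i : Fin N, p i * ((2*B) * C ^ (n+1)) := Finset.sum_le_sum (fun i _ => per i)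
        _ = (∑ i : Fin N, p i) * ((2*B) * C ^ (n+1)) := by rw [Finset.sum_mul]
        _ = (2*B) * C ^ (n+1) := by rw [hsum, one_mul]
  have le0 : ∀ f : X → ℝ, LipschitzWith 1 f → ∫ x, f x ∂μ - ∫ x, f x ∂ν ≤ 0 := by
    intro f hf
    have htend : Tendsto (fun n : ℕ => (2*B) * C ^ n) atTop (𝓝 0) := by
      have := (tendsto_pow_atTop_nhds_zero_of_lt_one hC0.le hC1).const_mul (2*B)
      simpa using this
    exact ge_of_tendsto' htend (fun n => key n f hf)
  have heq : ∀ f : X → ℝ, LipschitzWith 1 f → ∫ x, f x ∂μ = ∫ x, f x ∂ν := by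
    intro f hf
    have h1 := le0 f hf
    have hneg : LipschitzWith 1 (fun x => -f x) := by
      apply LipschitzWith.of_dist_le_mul
      intro x y
      rw [Real.dist_eq, show -f x - -f y = -(f x - f y) by ring, abs_neg, ← Real.dist_eq]
      simpa using hf.dist_le_mul x y
    have h2 := le0 _ hneg
    rw [integral_neg, integral_neg] at h2
    linarith
  exact meas_ext μ ν heq

lemma exists_fixed (hN : 1 ≤ N) {τ : Fin N → X → X} {p : Fin N → ℝ}
    (hC0 : 0 < C) (hC1 : C < 1)
    (hlip : ∀ i, ∀ x y : X, dist (τ i x) (τ i y) ≤ C * dist x y)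
    (hp : ∀ i, 0 < p i) (hsum : ∑ i, p i = 1) :
    ∃ μ : Measure X, IsProbabilityMeasure μ ∧
      ∑ i : Fin N, (ENNReal.ofReal (p i)) • (μ.map (τ i)) = μ := by
  obtain ⟨B, hB⟩ : ∃ B : ℝ, ∀ x y : X, dist x y ≤ B := by
    obtain ⟨B, hB⟩ := isBounded_iff.1 (isCompact_univ (X := X)).isBounded
    exact ⟨B, fun x y => hB (mem_univ x) (mem_univ y)⟩
  set x₀ : X := Classical.arbitrary X
  set h := cm hN p τ x₀ with hh
  have hcm : Measurable h := measurable_cm hN p x₀ hC0 hC1 hlip hB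
  set lam := volume.restrict (Ico (0:ℝ) 1) with hlam
  haveI : IsProbabilityMeasure lam := by
    constructor
    rw [hlam, Measure.restrict_apply_univ, Real.volume_Ico]
    norm_num
  have hmeas : ∀ i, Measurable (τ i) := fun i => (lip_tau hC0 hlip i).continuous.measurable
  refine ⟨lam.map h, Measure.isProbabilityMeasure_map hcm.aemeasurable, ?_⟩
  ext E hE
  have hmap : ∀ (S : Set X), MeasurableSet S → (lam.map h) S = volume (h ⁻¹' S ∩ Ico (0:ℝ) 1) := by
    intro S hS
    rw [Measure.map_apply hcm hS, hlam, Measure.restrict_apply (hcm hS)]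
  rw [Measure.coe_finset_sum, Finset.sum_apply]
  calc ∑ i : Fin N, ((ENNReal.ofReal (p i)) • ((lam.map h).map (τ i))) E
      = ∑ i : Fin N, ENNReal.ofReal (p i) * volume ((τ i ∘ h) ⁻¹' E ∩ Ico (0:ℝ) 1) := by
        apply Finset.sum_congr rfl
        intro i _
        rw [Measure.smul_apply, Measure.map_apply (hmeas i) hE,
          hmap _ ((hmeas i) hE), smul_eq_mul, ← preimage_comp]
    _ = volume (h ⁻¹' E ∩ Ico (0:ℝ) 1) :=
        (key_identity hN hp hsum x₀ hC0 hC1 hlip hB E hE).symm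
    _ = (lam.map h) E := (hmap E hE).symm

end Main
end HutchAux


/-- Hutchinson's theorem: a contractive iterated function system `τ₁, …, τ_N` on a
nonempty compact metric space, with weights `p_i > 0`, `∑ p_i = 1`, has a unique
equilibrium (self-similar) Borel probability measure `μ = ∑ p_i·(μ∘τ_i⁻¹)`. -/
theorem statement13 {X : Type*} [MetricSpace X] [CompactSpace X] [Nonempty X]
    [MeasurableSpace X] [BorelSpace X]
    (N : ℕ) (hN : 1 ≤ N)
    (τ : Fin N → X → X) (C : ℝ) (hC0 : 0 < C) (hC1 : C < 1)
    (hlip : ∀ i, ∀ x y : X, dist (τ i x) (τ i y) ≤ C * dist x y)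
    (p : Fin N → ℝ) (hp : ∀ i, 0 < p i) (hsum : ∑ i, p i = 1) :
    ∃! μ : Measure X, IsProbabilityMeasure μ ∧
      ∑ i : Fin N, (ENNReal.ofReal (p i)) • (μ.map (τ i)) = μ := by
  obtain ⟨μ, hμprob, hμfix⟩ := HutchAux.exists_fixed hN hC0 hC1 hlip hp hsum
  refine ⟨μ, ⟨hμprob, hμfix⟩, ?_⟩
  rintro ν ⟨hνprob, hνfix⟩
  haveI := hμprob
  haveI := hνprob
  exact HutchAux.fixed_unique hC0 hC1 hlip hp hsum ν μ hνfix hμfix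
end

section
/- Let X be a compact metric space, N ≥ 2, and τ₁, …, τ_N : X → X continuous injective maps with pairwise disjoint images whose union is X, such that the diameters of the sets τ_{i₁}∘⋯∘τ_{i_k}(X) tend to 0 uniformly as k → ∞. Let K be a complex Hilbert space and S₁, …, S_N bounded operators on K with S_i*S_j = δ_{ij}I and ∑_{i=1}^N S_iS_i* = I, and for each f ∈ K let μ_f be the unique finite Borel measure on X with μ_f(τ_{i₁}∘⋯∘τ_{i_k}(X)) = ‖S_{i_k}*⋯S_{i₁}*f‖² for all words. Then for every f ∈ K and every i ∈ {1,…,N}: (i) (μ_f).map τ_i = μ_{S_i f}; and (ii) the covariance identity ∑_{i=1}^N (μ_{S_i^* f}).map τ_i = μ_f holds. -/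
open MeasureTheory ENNReal

/-- The operator `S_{i₁} S_{i₂} ⋯ S_{i_k}` associated to a finite word. -/
noncomputable def wordOp {K : Type*} [NormedAddCommGroup K] [InnerProductSpace ℂ K]
    [CompleteSpace K] {N : ℕ} (S : Fin N → K →L[ℂ] K) (w : List (Fin N)) :
    K →L[ℂ] K :=
  (w.map S).prod

/-- The composition `τ_{i₁} ∘ τ_{i₂} ∘ ⋯ ∘ τ_{i_k}` of branch maps along a word. -/
def compWord {X : Type*} {N : ℕ} (τ : Fin N → X → X) (w : List (Fin N)) : X → X :=
  (w.map τ).foldr (· ∘ ·) id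

section AuxHelpers

variable {X : Type*} {N : ℕ} {τ : Fin N → X → X}

lemma compWord_nil : compWord τ [] = id := rfl

lemma compWord_cons (i : Fin N) (l : List (Fin N)) :
    compWord τ (i :: l) = τ i ∘ compWord τ l := rfl

lemma range_compWord_nil : Set.range (compWord τ ([] : List (Fin N))) = Set.univ := by
  rw [compWord_nil, Set.range_id]

lemma range_compWord_cons (i : Fin N) (l : List (Fin N)) :
    Set.range (compWord τ (i :: l)) = τ i '' Set.range (compWord τ l) := by
  rw [compWord_cons, Set.range_comp]

lemma continuous_compWord [TopologicalSpace X] (hτc : ∀ i, Continuous (τ i))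
    (l : List (Fin N)) : Continuous (compWord τ l) := by
  induction l with
  | nil => exact continuous_id
  | cons i t ih => rw [compWord_cons]; exact (hτc i).comp ih

lemma range_compWord_inter (hτinj : ∀ i, Function.Injective (τ i))
    (hdisj : ∀ i j, i ≠ j → Set.range (τ i) ∩ Set.range (τ j) = ∅)
    (l₁ l₂ : List (Fin N)) :
    Set.range (compWord τ l₁) ∩ Set.range (compWord τ l₂) = ∅
    ∨ Set.range (compWord τ l₁) ∩ Set.range (compWord τ l₂) = Set.range (compWord τ l₁)
    ∨ Set.range (compWord τ l₁) ∩ Set.range (compWord τ l₂) = Set.range (compWord τ l₂) := by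
  induction l₁ generalizing l₂ with
  | nil =>
    right; right
    rw [range_compWord_nil, Set.univ_inter]
  | cons i t ih =>
    cases l₂ with
    | nil =>
      right; left
      rw [range_compWord_nil, Set.inter_univ]
    | cons j t₂ =>
      by_cases hij : i = j
      · subst hij
        rw [range_compWord_cons, range_compWord_cons,
          (Set.image_inter (hτinj i)).symm]
        rcases ih t₂ with h | h | h <;> rw [h]
        · left; exact Set.image_empty _
        · right; left; rfl
        · right; right; rfl
      · left
        rw [range_compWord_cons, range_compWord_cons]
        have h1 : τ i '' Set.range (compWord τ t) ⊆ Set.range (τ i) :=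
          Set.image_subset_range _ _
        have h2 : τ j '' Set.range (compWord τ t₂) ⊆ Set.range (τ j) :=
          Set.image_subset_range _ _
        have := hdisj i j hij
        rw [Set.eq_empty_iff_forall_notMem] at this ⊢
        exact fun x hx => this x ⟨h1 hx.1, h2 hx.2⟩

end AuxHelpers

section AuxHelpers2

variable {X : Type*} [MetricSpace X] [CompactSpace X] [MeasurableSpace X] [BorelSpace X]
  {N : ℕ} {τ : Fin N → X → X}

lemma exists_word_mem (hcover : (⋃ i : Fin N, Set.range (τ i)) = Set.univ)
    (k : ℕ) (x : X) : ∃ w : Fin k → Fin N, x ∈ Set.range (compWord τ (List.ofFn w)) := by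
  induction k generalizing x with
  | zero =>
    refine ⟨Fin.elim0, ?_⟩
    simp [compWord, List.ofFn_zero]
  | succ k ih =>
    have hx : x ∈ ⋃ i : Fin N, Set.range (τ i) := by rw [hcover]; trivial
    obtain ⟨i, y, hy⟩ := Set.mem_iUnion.mp hx
    obtain ⟨w, z, hz⟩ := ih y
    refine ⟨Fin.cons i w, z, ?_⟩
    rw [List.ofFn_succ]
    simp only [Fin.cons_zero, Fin.cons_succ]
    rw [compWord_cons]
    simp only [Function.comp_apply]
    rw [hz, hy]

lemma measurableSet_range_compWord (hτc : ∀ i, Continuous (τ i)) (l : List (Fin N)) :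
    MeasurableSet (Set.range (compWord τ l)) :=
  (isCompact_range (continuous_compWord hτc l)).isClosed.measurableSet

lemma generate_cyl (hτc : ∀ i, Continuous (τ i))
    (hdiam : Filter.Tendsto
      (fun k : ℕ => ⨆ w : Fin k → Fin N,
        EMetric.diam (Set.range (compWord τ (List.ofFn w))))
      Filter.atTop (nhds 0))
    (hcover : (⋃ i : Fin N, Set.range (τ i)) = Set.univ) :
    (inferInstance : MeasurableSpace X) = MeasurableSpace.generateFrom
      {s : Set X | s = ∅ ∨ ∃ l : List (Fin N), s = Set.range (compWord τ l)} := by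
  apply le_antisymm
  · rw [BorelSpace.measurable_eq (α := X), borel]
    apply MeasurableSpace.generateFrom_le
    intro U hU
    have hUeq : U = ⋃ l ∈ {l : List (Fin N) | Set.range (compWord τ l) ⊆ U},
        Set.range (compWord τ l) := by
      apply Set.Subset.antisymm
      · intro x hx
        obtain ⟨ε, hε, hball⟩ := EMetric.isOpen_iff.mp hU x hx
        have hev : ∀ᶠ k in Filter.atTop,
            (⨆ w : Fin k → Fin N,
              EMetric.diam (Set.range (compWord τ (List.ofFn w)))) < ε :=
          hdiam.eventually_lt_const hε.bot_lt
        obtain ⟨k, hk⟩ := hev.exists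
        obtain ⟨w, hw⟩ := exists_word_mem hcover k x
        refine Set.mem_biUnion ?_ hw
        intro y hy
        apply hball
        calc edist y x ≤ EMetric.diam (Set.range (compWord τ (List.ofFn w))) :=
              EMetric.edist_le_diam_of_mem hy hw
          _ ≤ _ := le_iSup (fun w : Fin k → Fin N =>
              EMetric.diam (Set.range (compWord τ (List.ofFn w)))) w
          _ < ε := hk
      · exact Set.iUnion₂_subset fun l hl => hl
    rw [hUeq]
    exact MeasurableSet.biUnion (Set.to_countable _)
      (fun l _ => MeasurableSpace.measurableSet_generateFrom (Or.inr ⟨l, rfl⟩))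
  · apply MeasurableSpace.generateFrom_le
    rintro s (rfl | ⟨l, rfl⟩)
    · exact MeasurableSet.empty
    · exact measurableSet_range_compWord hτc l

lemma ext_cyl (hτc : ∀ i, Continuous (τ i))
    (hτinj : ∀ i, Function.Injective (τ i))
    (hdisj : ∀ i j, i ≠ j → Set.range (τ i) ∩ Set.range (τ j) = ∅)
    (hcover : (⋃ i : Fin N, Set.range (τ i)) = Set.univ)
    (hdiam : Filter.Tendsto
      (fun k : ℕ => ⨆ w : Fin k → Fin N,
        EMetric.diam (Set.range (compWord τ (List.ofFn w))))
      Filter.atTop (nhds 0))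
    (ν₁ ν₂ : Measure X) [IsFiniteMeasure ν₁] [IsFiniteMeasure ν₂]
    (h : ∀ l : List (Fin N), ν₁ (Set.range (compWord τ l)) = ν₂ (Set.range (compWord τ l))) :
    ν₁ = ν₂ := by
  refine ext_of_generate_finite _ (generate_cyl hτc hdiam hcover) ?_ ?_ ?_
  · rintro s (rfl | ⟨l₁, rfl⟩) t ht _
    · rw [Set.empty_inter]; exact Or.inl rfl
    rcases ht with rfl | ⟨l₂, rfl⟩
    · rw [Set.inter_empty]; exact Or.inl rfl
    rcases range_compWord_inter hτinj hdisj l₁ l₂ with h' | h' | h' <;> rw [h']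
    · exact Or.inl rfl
    · exact Or.inr ⟨l₁, rfl⟩
    · exact Or.inr ⟨l₂, rfl⟩
  · rintro s (rfl | ⟨l, rfl⟩)
    · simp
    · exact h l
  · have := h []
    rwa [range_compWord_nil] at this

end AuxHelpers2

section OpHelpers

variable {K : Type*} [NormedAddCommGroup K] [InnerProductSpace ℂ K] [CompleteSpace K]
  {N : ℕ}

lemma wordOp_nil (S : Fin N → K →L[ℂ] K) : wordOp S [] = 1 := rfl

lemma wordOp_cons (S : Fin N → K →L[ℂ] K) (i : Fin N) (l : List (Fin N)) :
    wordOp S (i :: l) = S i * wordOp S l := by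
  simp [wordOp]

lemma adjoint_wordOp_nil (S : Fin N → K →L[ℂ] K) :
    ContinuousLinearMap.adjoint (wordOp S []) = 1 := by
  rw [wordOp_nil, ← ContinuousLinearMap.star_eq_adjoint, star_one]

lemma adjoint_wordOp_cons (S : Fin N → K →L[ℂ] K) (i : Fin N) (l : List (Fin N)) (g : K) :
    ContinuousLinearMap.adjoint (wordOp S (i :: l)) g
      = ContinuousLinearMap.adjoint (wordOp S l) (ContinuousLinearMap.adjoint (S i) g) := by
  rw [wordOp_cons, ← ContinuousLinearMap.star_eq_adjoint, star_mul,
    ← ContinuousLinearMap.star_eq_adjoint, ← ContinuousLinearMap.star_eq_adjoint]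
  rfl

end OpHelpers

/-- Covariance of the measures `μ_f(E) = ‖P(E)f‖²`:
(i) `μ_f ∘ τᵢ⁻¹ = μ_{Sᵢf}`; (ii) `∑ᵢ μ_{Sᵢ*f} ∘ τᵢ⁻¹ = μ_f` (the variable-coefficient
generalization of Hutchinson's equilibrium equation). -/
theorem statement18 {X : Type*} [MetricSpace X] [CompactSpace X]
    [MeasurableSpace X] [BorelSpace X]
    (N : ℕ) (hN : 2 ≤ N)
    (τ : Fin N → X → X) (hτc : ∀ i, Continuous (τ i))
    (hτinj : ∀ i, Function.Injective (τ i))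
    (hdisj : ∀ i j, i ≠ j → Set.range (τ i) ∩ Set.range (τ j) = ∅)
    (hcover : (⋃ i : Fin N, Set.range (τ i)) = Set.univ)
    (hdiam : Filter.Tendsto
      (fun k : ℕ => ⨆ w : Fin k → Fin N,
        EMetric.diam (Set.range (compWord τ (List.ofFn w))))
      Filter.atTop (nhds 0))
    {K : Type*} [NormedAddCommGroup K] [InnerProductSpace ℂ K] [CompleteSpace K]
    (S : Fin N → K →L[ℂ] K)
    (hCuntz1 : ∀ i j, ContinuousLinearMap.adjoint (S i) * S j
        = if i = j then (1 : K →L[ℂ] K) else 0)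
    (hCuntz2 : ∑ i : Fin N, S i * ContinuousLinearMap.adjoint (S i) = 1)
    (μ : K → Measure X) (hfin : ∀ f, IsFiniteMeasure (μ f))
    (hμ : ∀ (f : K) (k : ℕ), 1 ≤ k → ∀ w : Fin k → Fin N,
      μ f (Set.range (compWord τ (List.ofFn w)))
        = (‖ContinuousLinearMap.adjoint (wordOp S (List.ofFn w)) f‖₊ : ℝ≥0∞) ^ 2) :
    (∀ (f : K) (i : Fin N), (μ f).map (τ i) = μ (S i f))
    ∧ (∀ f : K,
        ∑ i : Fin N, (μ (ContinuousLinearMap.adjoint (S i) f)).map (τ i) = μ f) := by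
  classical
  haveI := hfin
  -- basic operator identities
  have hS1 : ∀ (i : Fin N) (g : K),
      ContinuousLinearMap.adjoint (S i) (S i g) = g := by
    intro i g
    have h := hCuntz1 i i
    rw [if_pos rfl] at h
    have := DFunLike.congr_fun h g
    simpa using this
  have hS0 : ∀ (i j : Fin N), i ≠ j → ∀ g : K,
      ContinuousLinearMap.adjoint (S i) (S j g) = 0 := by
    intro i j hij g
    have h := hCuntz1 i j
    rw [if_neg hij] at h
    have := DFunLike.congr_fun h g
    simpa using this
  -- sum of norms identity (real version)
  have hrealsum : ∀ g : K,
      ∑ i : Fin N, ‖ContinuousLinearMap.adjoint (S i) g‖ ^ 2 = ‖g‖ ^ 2 := by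
    intro g
    have key : ∀ i : Fin N,
        (‖ContinuousLinearMap.adjoint (S i) g‖ : ℝ) ^ 2
          = RCLike.re (inner ℂ g ((S i * ContinuousLinearMap.adjoint (S i)) g) : ℂ) := by
      intro i
      rw [← @inner_self_eq_norm_sq ℂ]
      congr 1
      rw [ContinuousLinearMap.adjoint_inner_left]
      rfl
    rw [Finset.sum_congr rfl (fun i _ => key i)]
    rw [← map_sum]
    have : ∑ i : Fin N, (inner ℂ g ((S i * ContinuousLinearMap.adjoint (S i)) g) : ℂ)
        = inner ℂ g g := by
      rw [← inner_sum]
      congr 1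
      rw [← ContinuousLinearMap.sum_apply, hCuntz2]
      rfl
    rw [this, @inner_self_eq_norm_sq ℂ]
  have hcast : ∀ x : K, (‖x‖₊ : ℝ≥0∞) ^ 2 = ENNReal.ofReal (‖x‖ ^ 2) := by
    intro x
    rw [ENNReal.ofReal_pow (norm_nonneg x)]; exact congrArg (· ^ 2) (ofReal_norm x).symm
  have hnormsum : ∀ g : K,
      ∑ i : Fin N, (‖ContinuousLinearMap.adjoint (S i) g‖₊ : ℝ≥0∞) ^ 2
        = (‖g‖₊ : ℝ≥0∞) ^ 2 := by
    intro g
    simp_rw [hcast]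
    rw [← ENNReal.ofReal_sum_of_nonneg (fun i _ => sq_nonneg _), hrealsum]
  have hnormS : ∀ (i : Fin N) (g : K), ‖S i g‖ = ‖g‖ := by
    intro i g
    have h1 : (inner ℂ (S i g) (S i g) : ℂ) = inner ℂ g g := by
      rw [← ContinuousLinearMap.adjoint_inner_left, hS1]
    have h2 : (RCLike.re (inner ℂ (S i g) (S i g) : ℂ) : ℝ)
        = RCLike.re (inner ℂ g g : ℂ) := by rw [h1]
    rw [@inner_self_eq_norm_sq ℂ, @inner_self_eq_norm_sq ℂ] at h2
    calc ‖S i g‖ = Real.sqrt (‖S i g‖ ^ 2) := (Real.sqrt_sq (norm_nonneg _)).symm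
      _ = Real.sqrt (‖g‖ ^ 2) := by rw [h2]
      _ = ‖g‖ := Real.sqrt_sq (norm_nonneg _)
  have hnnS : ∀ (i : Fin N) (g : K), ‖S i g‖₊ = ‖g‖₊ := fun i g => NNReal.eq (hnormS i g)
  -- measure of the whole space
  have hμuniv : ∀ g : K, μ g Set.univ = (‖g‖₊ : ℝ≥0∞) ^ 2 := by
    intro g
    have hτmeas : ∀ i : Fin N, MeasurableSet (Set.range (τ i)) := fun i =>
      (isCompact_range (hτc i)).isClosed.measurableSet
    have hdisj' : Pairwise (Function.onFun Disjoint fun i : Fin N => Set.range (τ i)) :=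
      fun i j hij => Set.disjoint_iff_inter_eq_empty.mpr (hdisj i j hij)
    have h1 : μ g Set.univ = ∑ i : Fin N, μ g (Set.range (τ i)) := by
      rw [← hcover, measure_iUnion hdisj' hτmeas, tsum_fintype]
    have h2 : ∀ i : Fin N, μ g (Set.range (τ i))
        = (‖ContinuousLinearMap.adjoint (S i) g‖₊ : ℝ≥0∞) ^ 2 := by
      intro i
      have h := hμ g 1 le_rfl (fun _ => i)
      have hofn : List.ofFn (fun _ : Fin 1 => i) = [i] := by
        simp [List.ofFn_succ]
      rw [hofn, range_compWord_cons, range_compWord_nil, Set.image_univ] at h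
      have hv : ContinuousLinearMap.adjoint (wordOp S [i]) g
          = ContinuousLinearMap.adjoint (S i) g := by
        rw [adjoint_wordOp_cons, adjoint_wordOp_nil]
        rfl
      rw [h, hv]
    rw [h1, Finset.sum_congr rfl (fun i _ => h2 i), hnormsum]
  -- measure of cylinders
  have hmucyl : ∀ (g : K) (l : List (Fin N)),
      μ g (Set.range (compWord τ l))
        = (‖ContinuousLinearMap.adjoint (wordOp S l) g‖₊ : ℝ≥0∞) ^ 2 := by
    intro g l
    cases l with
    | nil =>
      rw [range_compWord_nil, adjoint_wordOp_nil, hμuniv]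
      rfl
    | cons i t =>
      have hk : 1 ≤ (i :: t).length := by simp
      have h := hμ g (i :: t).length hk (i :: t).get
      rwa [List.ofFn_get] at h
  -- preimage of cylinders under the branch maps
  have hpre_cons : ∀ (i j : Fin N) (t : List (Fin N)),
      τ i ⁻¹' Set.range (compWord τ (j :: t))
        = if i = j then Set.range (compWord τ t) else ∅ := by
    intro i j t
    rw [range_compWord_cons]
    by_cases h : i = j
    · subst h
      rw [if_pos rfl, Set.preimage_image_eq _ (hτinj i)]
    · rw [if_neg h, Set.eq_empty_iff_forall_notMem]
      intro x hx
      have hmem : τ i x ∈ Set.range (τ i) ∩ Set.range (τ j) :=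
        ⟨⟨x, rfl⟩, Set.image_subset_range _ _ hx⟩
      rw [hdisj i j h] at hmem
      exact hmem
  constructor
  · intro f i
    haveI : IsFiniteMeasure ((μ f).map (τ i)) := Measure.isFiniteMeasure_map _ _
    refine ext_cyl hτc hτinj hdisj hcover hdiam _ _ ?_
    intro l
    rw [Measure.map_apply (hτc i).measurable (measurableSet_range_compWord hτc l)]
    cases l with
    | nil =>
      rw [range_compWord_nil, Set.preimage_univ, hμuniv, hμuniv, hnnS]
    | cons j t =>
      rw [hpre_cons, hmucyl (S i f) (j :: t), adjoint_wordOp_cons]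
      by_cases h : i = j
      · subst h
        rw [if_pos rfl, hmucyl, hS1]
      · rw [if_neg h, measure_empty, hS0 j i (Ne.symm h), map_zero]
        simp
  · intro f
    haveI : ∀ i : Fin N,
        IsFiniteMeasure ((μ (ContinuousLinearMap.adjoint (S i) f)).map (τ i)) :=
      fun i => Measure.isFiniteMeasure_map _ _
    haveI : IsFiniteMeasure
        (∑ i : Fin N, (μ (ContinuousLinearMap.adjoint (S i) f)).map (τ i)) := by
      constructor
      rw [Measure.finset_sum_apply]
      exact ENNReal.sum_lt_top.mpr fun i _ => measure_lt_top _ _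
    refine ext_cyl hτc hτinj hdisj hcover hdiam _ _ ?_
    intro l
    rw [Measure.finset_sum_apply]
    cases l with
    | nil =>
      have hterm : ∀ i : Fin N,
          ((μ (ContinuousLinearMap.adjoint (S i) f)).map (τ i))
              (Set.range (compWord τ ([] : List (Fin N))))
            = (‖ContinuousLinearMap.adjoint (S i) f‖₊ : ℝ≥0∞) ^ 2 := by
        intro i
        rw [Measure.map_apply (hτc i).measurable (measurableSet_range_compWord hτc _),
          range_compWord_nil, Set.preimage_univ, hμuniv]
      rw [Finset.sum_congr rfl (fun i _ => hterm i), hnormsum, range_compWord_nil, hμuniv]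
    | cons j t =>
      have hterm : ∀ i : Fin N,
          ((μ (ContinuousLinearMap.adjoint (S i) f)).map (τ i))
              (Set.range (compWord τ (j :: t)))
            = if i = j
              then μ (ContinuousLinearMap.adjoint (S j) f) (Set.range (compWord τ t))
              else 0 := by
        intro i
        rw [Measure.map_apply (hτc i).measurable (measurableSet_range_compWord hτc _),
          hpre_cons]
        split_ifs with h
        · subst h; rfl
        · exact measure_empty
      rw [Finset.sum_congr rfl (fun i _ => hterm i), Finset.sum_ite_eq' Finset.univ j,
        if_pos (Finset.mem_univ j), hmucyl, hmucyl, adjoint_wordOp_cons]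
end

section
/- Let 𝕋 = ℝ/ℤ be the circle group with normalized Haar (Lebesgue) probability measure, and for n ∈ ℤ let e_n ∈ L²(𝕋) denote the character e_n(x) = exp(2πi n x). Define operators on L²(𝕋) by (S₀ f)(x) = f(2x) and (S₁ f)(x) = exp(2πi x)·f(2x). Then: (i) S₀ and S₁ are isometries of L²(𝕋); (ii) they satisfy the Cuntz relations S_i*S_j = δ_{ij}I and S₀S₀* + S₁S₁* = I, so they define a representation of the Cuntz algebra O₂ on L²(𝕋); and (iii) they permute the orthonormal basis of characters: S₀ e_n = e_{2n} and S₁ e_n = e_{2n+1} for every n ∈ ℤ. -/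
open MeasureTheory

instance : Fact ((0 : ℝ) < 1) := ⟨one_pos⟩


noncomputable section CuntzO2

open Complex ContinuousLinearMap
open scoped InnerProductSpace ComplexConjugate ENNReal

namespace CuntzO2

abbrev μT : Measure (AddCircle (1 : ℝ)) := AddCircle.haarAddCircle
abbrev H : Type := Lp ℂ 2 μT

lemma hD : MeasurePreserving (fun x : AddCircle (1:ℝ) => x + x) μT μT := by
  have h := μT.measurePreserving_zsmul (n := (2:ℤ)) two_ne_zero
  simpa [two_zsmul] using h

def T₀ : H →ₗᵢ[ℂ] H := Lp.compMeasurePreservingₗᵢ ℂ _ hD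

lemma coeFn_T₀ (f : H) : ⇑(T₀ f) =ᵐ[μT] fun x => f (x + x) :=
  Lp.coeFn_compMeasurePreserving f hD

lemma norm_fourier_one (x : AddCircle (1:ℝ)) : ‖fourier 1 x‖ = 1 := by
  rw [fourier_apply]
  exact Circle.norm_coe _

lemma memℒp_mul (f : H) : MemLp (fun x => fourier 1 x * f x) 2 μT := by
  have hb : MemLp (fun x : AddCircle (1:ℝ) => (fourier 1 x : ℂ)) ⊤ μT :=
    memLp_top_of_bound ((fourier 1).continuous.aestronglyMeasurable) 1
      (Filter.Eventually.of_forall fun x => le_of_eq (norm_fourier_one x))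
  simpa [smul_eq_mul, Pi.mul_def] using (Lp.memLp f).smul hb

lemma eLpNorm_mul_eq (f : H) :
    eLpNorm (fun x => fourier 1 x * f x) 2 μT = eLpNorm f 2 μT :=
  eLpNorm_congr_norm_ae <| Filter.Eventually.of_forall fun x => by
    rw [norm_mul, norm_fourier_one, one_mul]

def M : H →ₗᵢ[ℂ] H where
  toLinearMap :=
    { toFun := fun f => (memℒp_mul f).toLp _
      map_add' := by
        intro f g
        apply Lp.ext
        filter_upwards [MemLp.coeFn_toLp (memℒp_mul (f + g)),
          MemLp.coeFn_toLp (memℒp_mul f), MemLp.coeFn_toLp (memℒp_mul g),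
          Lp.coeFn_add ((memℒp_mul f).toLp _) ((memℒp_mul g).toLp _),
          Lp.coeFn_add f g] with x h1 h2 h3 h4 h5
        rw [h1, h4, Pi.add_apply, h2, h3, h5, Pi.add_apply, mul_add]
      map_smul' := by
        intro c f
        apply Lp.ext
        filter_upwards [MemLp.coeFn_toLp (memℒp_mul (c • f)),
          MemLp.coeFn_toLp (memℒp_mul f),
          Lp.coeFn_smul c ((memℒp_mul f).toLp _),
          Lp.coeFn_smul c f] with x h1 h2 h3 h4
        rw [RingHom.id_apply, h1, h3, Pi.smul_apply, h2, h4, Pi.smul_apply,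
          smul_eq_mul, smul_eq_mul, mul_left_comm] }
  norm_map' := by
    intro f
    show ‖MemLp.toLp (fun x => fourier 1 x * f x) (memℒp_mul f)‖ = ‖f‖
    rw [Lp.norm_toLp _ (memℒp_mul f), eLpNorm_mul_eq, Lp.norm_def]

lemma coeFn_M (f : H) : ⇑(M f) =ᵐ[μT] fun x => fourier 1 x * f x :=
  MemLp.coeFn_toLp (memℒp_mul f)

def T₁ : H →ₗᵢ[ℂ] H := M.comp T₀

lemma coeFn_T₁ (f : H) : ⇑(T₁ f) =ᵐ[μT] fun x => fourier 1 x * f (x + x) := by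
  have h1 : ⇑(T₁ f) =ᵐ[μT] fun x => fourier 1 x * (T₀ f) x := coeFn_M (T₀ f)
  filter_upwards [h1, coeFn_T₀ f] with x hx hy
  rw [hx, hy]

lemma fourier_double (n : ℤ) (x : AddCircle (1:ℝ)) :
    fourier n (x + x) = fourier (2 * n) x := by
  rw [fourier_apply, fourier_apply]
  congr 1
  rw [two_mul, add_zsmul, smul_add]

lemma map_basis₀ (n : ℤ) : T₀ (fourierLp 2 n) = fourierLp 2 (2 * n) := by
  apply Lp.ext
  have hc : (⇑(fourierLp 2 n : H)) =ᵐ[μT] ⇑(fourier n) := coeFn_fourierLp 2 n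
  have hc2 : (fun x : AddCircle (1:ℝ) => (fourierLp 2 n : H) (x + x))
      =ᵐ[μT] fun x => fourier n (x + x) :=
    hD.quasiMeasurePreserving.ae_eq_comp hc
  filter_upwards [coeFn_T₀ (fourierLp 2 n), hc2, coeFn_fourierLp 2 (2 * n)] with x h1 h2 h3
  rw [h1, h2, h3, fourier_double]

lemma map_basis₁ (n : ℤ) : T₁ (fourierLp 2 n) = fourierLp 2 (2 * n + 1) := by
  apply Lp.ext
  have hc : (⇑(fourierLp 2 n : H)) =ᵐ[μT] ⇑(fourier n) := coeFn_fourierLp 2 n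
  have hc2 : (fun x : AddCircle (1:ℝ) => (fourierLp 2 n : H) (x + x))
      =ᵐ[μT] fun x => fourier n (x + x) :=
    hD.quasiMeasurePreserving.ae_eq_comp hc
  filter_upwards [coeFn_T₁ (fourierLp 2 n), hc2, coeFn_fourierLp 2 (2 * n + 1)] with x h1 h2 h3
  rw [h1, h2, h3, fourier_double, ← fourier_add, add_comm]

lemma orth : Orthonormal ℂ (fun n : ℤ => (fourierLp 2 n : H)) := by
  have := (fourierBasis (T := 1)).orthonormal
  rwa [coe_fourierBasis] at this

lemma inner_basis (i j : ℤ) :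
    ⟪(fourierLp 2 i : H), (fourierLp 2 j : H)⟫_ℂ = if i = j then 1 else 0 :=
  orthonormal_iff_ite.mp orth i j

def S₀ : H →L[ℂ] H := T₀.toContinuousLinearMap
def S₁ : H →L[ℂ] H := T₁.toContinuousLinearMap

lemma S₀_basis (n : ℤ) : S₀ (fourierLp 2 n) = fourierLp 2 (2 * n) := map_basis₀ n
lemma S₁_basis (n : ℤ) : S₁ (fourierLp 2 n) = fourierLp 2 (2 * n + 1) := map_basis₁ n

lemma inner_vanish (S : H →L[ℂ] H) (c : ℤ → ℤ)
    (hS : ∀ m : ℤ, S (fourierLp 2 m) = (fourierLp 2 (c m) : H))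
    (g : H) (k : ℤ) (hk : ∀ m : ℤ, c m ≠ k) :
    ⟪(fourierLp 2 k : H), S g⟫_ℂ = 0 := by
  have hs := (fourierBasis (T := 1)).hasSum_repr g
  have hs2 := (hs.mapL S).mapL (innerSL ℂ (fourierLp 2 k : H))
  have hz : ∀ m : ℤ,
      innerSL ℂ (fourierLp 2 k : H) (S (((fourierBasis (T := 1)).repr g) m •
        (fourierBasis (T := 1)) m)) = 0 := by
    intro m
    have hb : (fourierBasis (T := 1)) m = (fourierLp 2 m : H) := by rw [coe_fourierBasis]
    rw [_root_.map_smul, _root_.map_smul, hb, hS m, innerSL_apply_apply, inner_basis,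
      if_neg (fun h => hk m h.symm), smul_zero]
  have h0 : HasSum (fun _ : ℤ => (0 : ℂ)) (innerSL ℂ (fourierLp 2 k : H) (S g)) := by
    simpa only [hz] using hs2
  have := h0.unique hasSum_zero
  rwa [innerSL_apply_apply] at this

lemma adj₀_even (n : ℤ) :
    ContinuousLinearMap.adjoint S₀ (fourierLp 2 (2 * n)) = (fourierLp 2 n : H) := by
  apply ext_inner_left ℂ
  intro v
  rw [adjoint_inner_right, ← S₀_basis n]
  exact T₀.inner_map_map v (fourierLp 2 n)

lemma adj₀_odd (n : ℤ) :
    ContinuousLinearMap.adjoint S₀ (fourierLp 2 (2 * n + 1)) = 0 := by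
  apply ext_inner_left ℂ
  intro v
  rw [adjoint_inner_right, inner_zero_right, ← inner_conj_symm,
    inner_vanish S₀ (fun m => 2 * m) S₀_basis v (2 * n + 1) (fun m => show 2*m ≠ 2*n+1 by omega), map_zero]

lemma adj₁_odd (n : ℤ) :
    ContinuousLinearMap.adjoint S₁ (fourierLp 2 (2 * n + 1)) = (fourierLp 2 n : H) := by
  apply ext_inner_left ℂ
  intro v
  rw [adjoint_inner_right, ← S₁_basis n]
  exact T₁.inner_map_map v (fourierLp 2 n)

lemma adj₁_even (n : ℤ) :
    ContinuousLinearMap.adjoint S₁ (fourierLp 2 (2 * n)) = 0 := by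
  apply ext_inner_left ℂ
  intro v
  rw [adjoint_inner_right, inner_zero_right, ← inner_conj_symm,
    inner_vanish S₁ (fun m => 2 * m + 1) S₁_basis v (2 * n) (fun m => show 2*m+1 ≠ 2*n by omega), map_zero]

lemma clm_ext {A B : H →L[ℂ] H}
    (h : ∀ n : ℤ, A (fourierLp 2 n) = B (fourierLp 2 n)) : A = B := by
  refine ContinuousLinearMap.ext_on (s := Set.range (fun n : ℤ => (fourierLp 2 n : H)))
    (Submodule.dense_iff_topologicalClosure_eq_top.mpr ?_) ?_
  · simpa [coe_fourierBasis] using (fourierBasis (T := 1)).dense_span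
  · rintro x ⟨n, rfl⟩; exact h n

theorem final :
    ContinuousLinearMap.adjoint S₀ * S₀ = 1
    ∧ ContinuousLinearMap.adjoint S₁ * S₁ = 1
    ∧ ContinuousLinearMap.adjoint S₀ * S₁ = 0
    ∧ ContinuousLinearMap.adjoint S₁ * S₀ = 0
    ∧ S₀ * ContinuousLinearMap.adjoint S₀ + S₁ * ContinuousLinearMap.adjoint S₁ = 1 := by
  refine ⟨?_, ?_, ?_, ?_, ?_⟩
  · refine ContinuousLinearMap.ext fun f => ?_
    apply ext_inner_left ℂ
    intro g
    rw [ContinuousLinearMap.mul_apply, adjoint_inner_right, ContinuousLinearMap.one_apply]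
    exact T₀.inner_map_map g f
  · refine ContinuousLinearMap.ext fun f => ?_
    apply ext_inner_left ℂ
    intro g
    rw [ContinuousLinearMap.mul_apply, adjoint_inner_right, ContinuousLinearMap.one_apply]
    exact T₁.inner_map_map g f
  · apply clm_ext
    intro n
    rw [ContinuousLinearMap.mul_apply, S₁_basis, adj₀_odd, ContinuousLinearMap.zero_apply]
  · apply clm_ext
    intro n
    rw [ContinuousLinearMap.mul_apply, S₀_basis, adj₁_even, ContinuousLinearMap.zero_apply]
  · apply clm_ext
    intro k
    rcases Int.even_or_odd k with ⟨n, hn⟩ | ⟨n, hn⟩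
    · have hk : k = 2 * n := by omega
      subst hk
      rw [ContinuousLinearMap.add_apply, ContinuousLinearMap.mul_apply,
        ContinuousLinearMap.mul_apply, adj₀_even, adj₁_even, S₀_basis, map_zero,
        add_zero, ContinuousLinearMap.one_apply]
    · have hk : k = 2 * n + 1 := by omega
      subst hk
      rw [ContinuousLinearMap.add_apply, ContinuousLinearMap.mul_apply,
        ContinuousLinearMap.mul_apply, adj₀_odd, adj₁_odd, S₁_basis, map_zero,
        zero_add, ContinuousLinearMap.one_apply]

end CuntzO2

end CuntzO2


/-- The operators `(S₀f)(x) = f(2x)` and `(S₁f)(x) = e^{2πix}·f(2x)` on `L²(𝕋)`,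
`𝕋 = ℝ/ℤ` with normalized Haar measure, are isometries satisfying the Cuntz relations
(a representation of `O₂`), and they permute the Fourier basis:
`S₀ e_n = e_{2n}`, `S₁ e_n = e_{2n+1}`. -/
theorem statement19 :
    ∃ S₀ S₁ : Lp ℂ 2 (AddCircle.haarAddCircle : Measure (AddCircle (1 : ℝ))) →L[ℂ]
        Lp ℂ 2 (AddCircle.haarAddCircle : Measure (AddCircle (1 : ℝ))),
      (∀ f : Lp ℂ 2 (AddCircle.haarAddCircle : Measure (AddCircle (1 : ℝ))),
          ⇑(S₀ f) =ᵐ[(AddCircle.haarAddCircle : Measure (AddCircle (1 : ℝ)))]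
            fun x => f (x + x))
      ∧ (∀ f : Lp ℂ 2 (AddCircle.haarAddCircle : Measure (AddCircle (1 : ℝ))),
          ⇑(S₁ f) =ᵐ[(AddCircle.haarAddCircle : Measure (AddCircle (1 : ℝ)))]
            fun x => fourier 1 x * f (x + x))
      ∧ (∀ f, ‖S₀ f‖ = ‖f‖) ∧ (∀ f, ‖S₁ f‖ = ‖f‖)
      ∧ ContinuousLinearMap.adjoint S₀ * S₀ = 1
      ∧ ContinuousLinearMap.adjoint S₁ * S₁ = 1
      ∧ ContinuousLinearMap.adjoint S₀ * S₁ = 0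
      ∧ ContinuousLinearMap.adjoint S₁ * S₀ = 0
      ∧ S₀ * ContinuousLinearMap.adjoint S₀ + S₁ * ContinuousLinearMap.adjoint S₁ = 1
      ∧ (∀ n : ℤ, S₀ (fourierLp 2 n) = fourierLp 2 (2 * n))
      ∧ (∀ n : ℤ, S₁ (fourierLp 2 n) = fourierLp 2 (2 * n + 1)) := by
  obtain ⟨h1, h2, h3, h4, h5⟩ := CuntzO2.final
  exact ⟨CuntzO2.S₀, CuntzO2.S₁, fun f => CuntzO2.coeFn_T₀ f, fun f => CuntzO2.coeFn_T₁ f,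
    fun f => CuntzO2.T₀.norm_map f, fun f => CuntzO2.T₁.norm_map f,
    h1, h2, h3, h4, h5, CuntzO2.S₀_basis, CuntzO2.S₁_basis⟩
end
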